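/- arXiv:math/0403240 — 3 statements merged into one kernel-verified Lean document; each statement's English description precedes it below -/
import Mathlib

section
/- Let χ' : 𝔽_qˣ → kˣ be a character and let χ be the restriction of χ'∘det to H, so that χ^s = χ and T_{n_s} maps Ind_B^Γ χ to itself. Then Ind_B^Γ χ is the internal direct sum of the k[Γ]-submodules Im(T_{n_s}) and Im(1 + T_{n_s}); Im(1 + T_{n_s}) is the one-dimensional subspace spanned by the function g ↦ χ'(det g), on which Γ acts through the character χ'∘det; consequently Im(T_{n_s}) has dimension q. Moreover Im(T_{n_s} : Ind_B^Γ χ → Ind_B^Γ χ) is isomorphic as a k[Γ]-module to St ⊗ (χ'∘det), where St = Im(T_{n_s} : Ind_B^Γ 𝟙 → Ind_B^Γ 𝟙) for the trivial character 𝟙. -/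
set_option linter.unusedSectionVars false
set_option linter.unnecessarySeqFocus false
set_option maxHeartbeats 1000000


open Matrix

noncomputable section

abbrev GL2 (F : Type) [Field F] := Matrix.GeneralLinearGroup (Fin 2) F

variable (F : Type) [Field F] [Fintype F] (k : Type) [Field k]

/-- The unipotent upper-triangular matrix `[[1, c], [0, 1]]`. -/
def uElt (c : F) : GL2 F :=
  Matrix.GeneralLinearGroup.mkOfDetNeZero !![1, c; 0, 1] (by simp [Matrix.det_fin_two_of])

/-- The upper-triangular matrix `[[a, c], [0, d]]`. -/
def bElt (a d : Fˣ) (c : F) : GL2 F :=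
  Matrix.GeneralLinearGroup.mkOfDetNeZero !![(a : F), c; 0, (d : F)]
    (by simp [Matrix.det_fin_two_of])

/-- The diagonal matrix `[[a, 0], [0, d]]`. -/
def hElt (a d : Fˣ) : GL2 F := bElt F a d 0

/-- The matrix `n_s = [[0, -1], [1, 0]]`. -/
def nsElt : GL2 F :=
  Matrix.GeneralLinearGroup.mkOfDetNeZero !![0, -1; 1, 0] (by norm_num [Matrix.det_fin_two_of])

/-- The right-translation representation of `GL₂(F)` on the space of `k`-valued functions. -/
def rt : Representation k (GL2 F) (GL2 F → k) where
  toFun g :=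
    { toFun := fun f x => f (x * g)
      map_add' := fun _ _ => rfl
      map_smul' := fun _ _ => rfl }
  map_one' := by ext f x; simp
  map_mul' g g' := by ext f x; simp [mul_assoc]

/-- `χ^s`, the character obtained from `χ` by swapping the two diagonal entries. -/
def swapChar (χ : (Fˣ × Fˣ) →* kˣ) : (Fˣ × Fˣ) →* kˣ where
  toFun x := χ (x.2, x.1)
  map_one' := χ.map_one
  map_mul' x y := by rw [← _root_.map_mul]; rfl

/-- The induced representation `Ind_B^Γ χ` as a subspace of the space of functions `Γ → k`:
functions satisfying `f (b * g) = χ (b) * f g` for all upper-triangular `b`. -/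
def Ind (χ : (Fˣ × Fˣ) →* kˣ) : Submodule k (GL2 F → k) where
  carrier := {f | ∀ (a d : Fˣ) (c : F) (g : GL2 F), f (bElt F a d c * g) = (χ (a, d) : k) * f g}
  add_mem' := by
    intro f1 f2 h1 h2 a d c g
    simp only [Pi.add_apply, h1 a d c g, h2 a d c g]
    ring
  zero_mem' := by intro a d c g; simp
  smul_mem' := by
    intro t f hf a d c g
    simp only [Pi.smul_apply, smul_eq_mul, hf a d c g]
    ring

/-- The Hecke operator `T_{n_s}`, `(T f) x = ∑_{c ∈ F} f (n_s⁻¹ * u_c * x)`. -/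
def heckeT : (GL2 F → k) →ₗ[k] (GL2 F → k) where
  toFun f x := ∑ c : F, f ((nsElt F)⁻¹ * uElt F c * x)
  map_add' f g := by funext x; simp [Finset.sum_add_distrib]
  map_smul' t f := by funext x; simp [Finset.mul_sum]

/-- The submodule of invariants of a representation under a set of group elements. -/
def invSubmodule {G V : Type*} [Group G] [AddCommGroup V] [Module k V]
    (ρ : Representation k G V) (S : Set G) : Submodule k V where
  carrier := {v | ∀ g ∈ S, ρ g v = v}
  add_mem' := by intro v w hv hw g hg; rw [map_add, hv g hg, hw g hg]
  zero_mem' := by intro g hg; rw [map_zero]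
  smul_mem' := by intro c v hv g hg; rw [LinearMap.map_smul, hv g hg]


section AuxLemmas

def wElt : GL2 F :=
  Matrix.GeneralLinearGroup.mkOfDetNeZero !![0, 1; -1, 0] (by norm_num [Matrix.det_fin_two_of])

variable {F}

lemma coe_uElt (c : F) : (uElt F c : Matrix (Fin 2) (Fin 2) F) = !![1, c; 0, 1] := rfl
lemma coe_bElt (a d : Fˣ) (c : F) :
    (bElt F a d c : Matrix (Fin 2) (Fin 2) F) = !![(a : F), c; 0, (d : F)] := rfl
lemma coe_wElt : (wElt F : Matrix (Fin 2) (Fin 2) F) = !![0, 1; -1, 0] := rfl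

lemma ns_inv : (nsElt F)⁻¹ = wElt F := by
  apply inv_eq_of_mul_eq_one_right
  apply Units.ext
  show (!![0,-1;1,0] : Matrix (Fin 2) (Fin 2) F) * !![0,1;-1,0] = 1
  rw [Matrix.mul_fin_two, Matrix.one_fin_two]
  norm_num

lemma uElt_mul (a b : F) : uElt F a * uElt F b = uElt F (a + b) := by
  apply Units.ext
  show (!![1,a;0,1] : Matrix (Fin 2) (Fin 2) F) * !![1,b;0,1] = !![1,a+b;0,1]
  rw [Matrix.mul_fin_two]
  norm_num [add_comm]

lemma uElt_zero : uElt F (0 : F) = 1 := by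
  apply Units.ext
  show (!![1,(0:F);0,1] : Matrix (Fin 2) (Fin 2) F) = 1
  rw [Matrix.one_fin_two]

lemma det_uElt (c : F) : Matrix.GeneralLinearGroup.det (uElt F c) = 1 := by
  apply Units.ext
  show Matrix.det (!![1,c;0,1] : Matrix (Fin 2) (Fin 2) F) = 1
  simp [Matrix.det_fin_two_of]

lemma det_bElt (a d : Fˣ) (c : F) :
    Matrix.GeneralLinearGroup.det (bElt F a d c) = a * d := by
  apply Units.ext
  show Matrix.det (!![(a:F),c;0,(d:F)] : Matrix (Fin 2) (Fin 2) F) = (a : F) * d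
  simp [Matrix.det_fin_two_of]

lemma det_wElt : Matrix.GeneralLinearGroup.det (wElt F) = 1 := by
  apply Units.ext
  show Matrix.det (!![0,1;-1,0] : Matrix (Fin 2) (Fin 2) F) = 1
  norm_num [Matrix.det_fin_two_of]

-- M1 : w u_c b = hElt d a * (w u_{(e+c*d)/a})
lemma M1 (c : F) (a d : Fˣ) (e : F) :
    wElt F * uElt F c * bElt F a d e =
      bElt F d a 0 * (wElt F * uElt F ((e + c * d) / a)) := by
  apply Units.ext
  show (!![0,1;-1,0] : Matrix (Fin 2) (Fin 2) F) * !![1,c;0,1] * !![(a:F),e;0,(d:F)]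
      = !![(d:F),0;0,(a:F)] * (!![0,1;-1,0] * !![1,(e + c * d)/(a:F);0,1])
  have ha : (a : F) ≠ 0 := a.ne_zero
  rw [Matrix.mul_fin_two, Matrix.mul_fin_two, Matrix.mul_fin_two, Matrix.mul_fin_two]
  ext i j
  fin_cases i <;> fin_cases j <;> simp <;> field_simp <;> ring

-- M2 : c ≠ 0 → w u_c w = b * (w u_{-c⁻¹}) with b = bElt (-c⁻¹) (-c) 1
lemma M2 {c : F} (hc : c ≠ 0) :
    wElt F * uElt F c * wElt F =
      bElt F (Units.mk0 (-c⁻¹) (by simpa using hc)) (Units.mk0 (-c) (by simpa using hc)) 1 *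
        (wElt F * uElt F (-c⁻¹)) := by
  apply Units.ext
  show (!![0,1;-1,0] : Matrix (Fin 2) (Fin 2) F) * !![1,c;0,1] * !![0,1;-1,0]
      = !![-c⁻¹,1;0,-c] * (!![0,1;-1,0] * !![1,-c⁻¹;0,1])
  rw [Matrix.mul_fin_two, Matrix.mul_fin_two, Matrix.mul_fin_two, Matrix.mul_fin_two]
  ext i j
  fin_cases i <;> fin_cases j <;> simp [hc]

-- M3 : w * w = bElt (-1) (-1) 0
lemma M3 : wElt F * wElt F = bElt F (-1) (-1) 0 := by
  apply Units.ext
  show (!![0,1;-1,0] : Matrix (Fin 2) (Fin 2) F) * !![0,1;-1,0] = !![((-1:Fˣ):F),0;0,((-1:Fˣ):F)]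
  norm_num [Matrix.mul_fin_two]

lemma det_coe (x : GL2 F) :
    ((Matrix.GeneralLinearGroup.det x : Fˣ) : F) = Matrix.det (x : Matrix (Fin 2) (Fin 2) F) := rfl

lemma det_entries (x : GL2 F) :
    ((Matrix.GeneralLinearGroup.det x : Fˣ) : F) =
      (x : Matrix (Fin 2) (Fin 2) F) 0 0 * (x : Matrix (Fin 2) (Fin 2) F) 1 1 -
        (x : Matrix (Fin 2) (Fin 2) F) 0 1 * (x : Matrix (Fin 2) (Fin 2) F) 1 0 := by
  rw [det_coe, Matrix.det_fin_two]

lemma bruhat0 (x : GL2 F) (hx : (x : Matrix (Fin 2) (Fin 2) F) 1 0 = 0) :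
    ∃ (a d : Fˣ) (e : F), x = bElt F a d e ∧ a * d = Matrix.GeneralLinearGroup.det x := by
  have hdet : ((Matrix.GeneralLinearGroup.det x : Fˣ) : F) ≠ 0 := Units.ne_zero _
  have hde : ((Matrix.GeneralLinearGroup.det x : Fˣ) : F) =
      (x : Matrix (Fin 2) (Fin 2) F) 0 0 * (x : Matrix (Fin 2) (Fin 2) F) 1 1 := by
    rw [det_entries, hx]; ring
  have h00 : (x : Matrix (Fin 2) (Fin 2) F) 0 0 ≠ 0 := fun h => hdet (by rw [hde, h, zero_mul])
  have h11 : (x : Matrix (Fin 2) (Fin 2) F) 1 1 ≠ 0 := fun h => hdet (by rw [hde, h, mul_zero])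
  refine ⟨Units.mk0 _ h00, Units.mk0 _ h11, (x : Matrix (Fin 2) (Fin 2) F) 0 1, ?_, ?_⟩
  · apply Units.ext
    refine Matrix.ext fun i j => ?_
    show (x : Matrix (Fin 2) (Fin 2) F) i j = _
    fin_cases i <;> fin_cases j <;>
      simp [coe_bElt, hx]
  · exact Units.ext hde.symm

lemma bruhat1 (x : GL2 F) (hx : (x : Matrix (Fin 2) (Fin 2) F) 1 0 ≠ 0) :
    ∃ (a d : Fˣ) (e : F),
      x = bElt F a d e *
        (wElt F * uElt F ((x : Matrix (Fin 2) (Fin 2) F) 1 1 / (x : Matrix (Fin 2) (Fin 2) F) 1 0)) ∧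
      a * d = Matrix.GeneralLinearGroup.det x := by
  have hdet : ((Matrix.GeneralLinearGroup.det x : Fˣ) : F) ≠ 0 := Units.ne_zero _
  have hd := det_entries x
  have ha : -((Matrix.GeneralLinearGroup.det x : Fˣ) : F) / (x : Matrix (Fin 2) (Fin 2) F) 1 0 ≠ 0 := by
    simp only [ne_eq, div_eq_zero_iff, neg_eq_zero, not_or]
    exact ⟨hdet, hx⟩
  refine ⟨Units.mk0 _ ha, Units.mk0 (-(x : Matrix (Fin 2) (Fin 2) F) 1 0) (neg_ne_zero.mpr hx),
    -(x : Matrix (Fin 2) (Fin 2) F) 0 0, ?_, ?_⟩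
  · apply Units.ext
    show (x : Matrix (Fin 2) (Fin 2) F) = _
    rw [Matrix.GeneralLinearGroup.coe_mul, Matrix.GeneralLinearGroup.coe_mul,
      coe_bElt, coe_wElt, coe_uElt, Matrix.mul_fin_two, Matrix.mul_fin_two]
    simp only [det_coe] at hd ⊢
    refine Matrix.ext fun i j => ?_
    fin_cases i <;> fin_cases j <;> simp <;> field_simp
    linear_combination hd
  · apply Units.ext
    show -((Matrix.GeneralLinearGroup.det x : Fˣ) : F) /
        (x : Matrix (Fin 2) (Fin 2) F) 1 0 * -(x : Matrix (Fin 2) (Fin 2) F) 1 0 = _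
    field_simp

def affEquiv (a d : Fˣ) (e : F) : F ≃ F where
  toFun c := (e + c * d) / a
  invFun m := (m * a - e) / d
  left_inv c := by field_simp; ring
  right_inv m := by field_simp; ring


section CharLemmas

variable {k}
variable (χ' : Fˣ →* kˣ)

lemma chi_coe (a d : Fˣ) : ((χ'.comp mulMonoidHom) (a, d) : kˣ) = χ' (a * d) := rfl

lemma heckeT_apply (f : GL2 F → k) (x : GL2 F) :
    heckeT F k f x = ∑ c : F, f (wElt F * uElt F c * x) := by
  simp [heckeT, ns_inv]

lemma uElt_eq_bElt (m : F) : uElt F m = bElt F 1 1 m := by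
  apply Units.ext
  show (!![1,m;0,1] : Matrix (Fin 2) (Fin 2) F) = !![((1:Fˣ):F),m;0,((1:Fˣ):F)]
  norm_num

lemma Ind_apply_bElt {f : GL2 F → k} (hf : f ∈ Ind F k (χ'.comp mulMonoidHom))
    (a d : Fˣ) (c : F) (g : GL2 F) :
    f (bElt F a d c * g) = (χ' (a * d) : k) * f g := hf a d c g

lemma Ind_apply_u {f : GL2 F → k} (hf : f ∈ Ind F k (χ'.comp mulMonoidHom)) (m : F) :
    f (uElt F m) = f 1 := by
  rw [uElt_eq_bElt, ← mul_one (bElt F 1 1 m), Ind_apply_bElt χ' hf]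
  simp

lemma T_mem_Ind {f : GL2 F → k} (hf : f ∈ Ind F k (χ'.comp mulMonoidHom)) :
    heckeT F k f ∈ Ind F k (χ'.comp mulMonoidHom) := by
  intro a d e g
  show heckeT F k f (bElt F a d e * g) = _
  rw [heckeT_apply, heckeT_apply, chi_coe]
  have key : ∀ c : F, wElt F * uElt F c * (bElt F a d e * g) =
      bElt F d a 0 * (wElt F * uElt F ((e + c * (d : F)) / (a : F)) * g) := by
    intro c
    rw [← mul_assoc, M1, mul_assoc]
  calc ∑ c : F, f (wElt F * uElt F c * (bElt F a d e * g))
      = ∑ c : F, (χ' (d * a) : k) * f (wElt F * uElt F ((e + c * (d : F)) / (a : F)) * g) := by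
        refine Finset.sum_congr rfl fun c _ => ?_
        rw [key c, Ind_apply_bElt χ' hf]
    _ = (χ' (a * d) : k) * ∑ c : F, f (wElt F * uElt F ((e + c * (d : F)) / (a : F)) * g) := by
        rw [← Finset.mul_sum, mul_comm d a]
    _ = (χ' (a * d) : k) * ∑ c : F, f (wElt F * uElt F c * g) := by
        congr 1
        exact Equiv.sum_comp (affEquiv a d e) (fun m => f (wElt F * uElt F m * g))

lemma negc_unit_mul {c : F} (hc : c ≠ 0) :
    Units.mk0 (-c⁻¹) (by simpa using hc) * Units.mk0 (-c) (by simpa using hc) = 1 := by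
  apply Units.ext
  show -c⁻¹ * -c = 1
  field_simp

lemma sum_punctured [DecidableEq F] (m : F) (g : F → k) :
    ∑ c ∈ Finset.univ.erase (0 : F), g (-c⁻¹ + m) = ∑ c ∈ Finset.univ.erase m, g c := by
  refine Finset.sum_bij' (fun c _ => -c⁻¹ + m) (fun c _ => (m - c)⁻¹) ?_ ?_ ?_ ?_ ?_
  · intro a ha
    simp only [Finset.mem_erase, Finset.mem_univ, and_true, ne_eq] at ha ⊢
    intro h
    have h2 : -a⁻¹ = 0 := by linear_combination h
    exact ha (inv_eq_zero.mp (by simpa using h2))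
  · intro a ha
    simp only [Finset.mem_erase, Finset.mem_univ, and_true, ne_eq] at ha ⊢
    have : m - a ≠ 0 := sub_ne_zero.mpr (Ne.symm ha)
    exact inv_ne_zero this
  · intro a ha
    show (m - (-a⁻¹ + m))⁻¹ = a
    have h1 : m - (-a⁻¹ + m) = a⁻¹ := by ring
    rw [h1, inv_inv]
  · intro a ha
    show -((m - a)⁻¹)⁻¹ + m = a
    rw [inv_inv]
    ring
  · intro a ha
    rfl

lemma T_row {f : GL2 F → k} (hf : f ∈ Ind F k (χ'.comp mulMonoidHom)) (m : F) :
    heckeT F k f (wElt F * uElt F m) =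
      f 1 + (∑ c : F, f (wElt F * uElt F c)) - f (wElt F * uElt F m) := by
  classical
  rw [heckeT_apply]
  rw [← Finset.add_sum_erase _ _ (Finset.mem_univ (0 : F))]
  have h0 : f (wElt F * uElt F 0 * (wElt F * uElt F m)) = f 1 := by
    rw [uElt_zero, mul_one, ← mul_assoc, M3, Ind_apply_bElt χ' hf, Ind_apply_u χ' hf]
    simp
  have hterm : ∀ c ∈ Finset.univ.erase (0 : F),
      f (wElt F * uElt F c * (wElt F * uElt F m)) = f (wElt F * uElt F (-c⁻¹ + m)) := by
    intro c hc
    rw [Finset.mem_erase] at hc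
    rw [← mul_assoc, M2 hc.1, mul_assoc, mul_assoc, uElt_mul, Ind_apply_bElt χ' hf,
      negc_unit_mul hc.1]
    simp
  rw [Finset.sum_congr rfl hterm, sum_punctured m (fun c => f (wElt F * uElt F c)),
    Finset.sum_erase_eq_sub (Finset.mem_univ m), h0]
  ring

lemma bruhat_app0 {f : GL2 F → k} (hf : f ∈ Ind F k (χ'.comp mulMonoidHom)) {x : GL2 F}
    (hx : (x : Matrix (Fin 2) (Fin 2) F) 1 0 = 0) :
    f x = (χ' (Matrix.GeneralLinearGroup.det x) : k) * f 1 := by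
  obtain ⟨a, d, e, hxe, had⟩ := bruhat0 x hx
  conv_lhs => rw [hxe, ← mul_one (bElt F a d e)]
  rw [Ind_apply_bElt χ' hf, had]

lemma bruhat_app1 {f : GL2 F → k} (hf : f ∈ Ind F k (χ'.comp mulMonoidHom)) {x : GL2 F}
    (hx : (x : Matrix (Fin 2) (Fin 2) F) 1 0 ≠ 0) :
    f x = (χ' (Matrix.GeneralLinearGroup.det x) : k) *
      f (wElt F * uElt F ((x : Matrix (Fin 2) (Fin 2) F) 1 1 / (x : Matrix (Fin 2) (Fin 2) F) 1 0)) := by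
  obtain ⟨a, d, e, hxe, had⟩ := bruhat1 x hx
  conv_lhs => rw [hxe]
  rw [Ind_apply_bElt χ' hf, had]

lemma det_wux (c : F) (x : GL2 F) :
    Matrix.GeneralLinearGroup.det (wElt F * uElt F c * x) = Matrix.GeneralLinearGroup.det x := by
  rw [_root_.map_mul, _root_.map_mul, det_wElt, det_uElt, one_mul, one_mul]

lemma wux_entries (c : F) (x : GL2 F) :
    ((wElt F * uElt F c * x : GL2 F) : Matrix (Fin 2) (Fin 2) F) 1 0
        = -((x : Matrix (Fin 2) (Fin 2) F) 0 0 + c * (x : Matrix (Fin 2) (Fin 2) F) 1 0) ∧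
    ((wElt F * uElt F c * x : GL2 F) : Matrix (Fin 2) (Fin 2) F) 1 1
        = -((x : Matrix (Fin 2) (Fin 2) F) 0 1 + c * (x : Matrix (Fin 2) (Fin 2) F) 1 1) := by
  rw [Matrix.GeneralLinearGroup.coe_mul, Matrix.GeneralLinearGroup.coe_mul, coe_wElt, coe_uElt,
    Matrix.eta_fin_two (x : Matrix (Fin 2) (Fin 2) F), Matrix.mul_fin_two, Matrix.mul_fin_two]
  constructor <;> simp <;> ring

/-- The function `g ↦ χ'(det g)`. -/
def eZero : GL2 F → k := fun x => (χ' (Matrix.GeneralLinearGroup.det x) : k)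

lemma eZero_mem : eZero χ' ∈ Ind F k (χ'.comp mulMonoidHom) := by
  intro a d c g
  show (χ' (Matrix.GeneralLinearGroup.det (bElt F a d c * g)) : k) = _
  rw [_root_.map_mul, det_bElt, _root_.map_mul, chi_coe, Units.val_mul]
  rfl

lemma T_eZero (hq : (Fintype.card F : k) = 0) : heckeT F k (eZero χ') = 0 := by
  funext x
  rw [heckeT_apply]
  have : ∀ c : F, eZero χ' (wElt F * uElt F c * x) = eZero χ' x := by
    intro c
    show (χ' (Matrix.GeneralLinearGroup.det _) : k) = _
    rw [det_wux]
    rfl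
  rw [Finset.sum_congr rfl (fun c _ => this c), Finset.sum_const, Finset.card_univ,
    nsmul_eq_mul, hq, zero_mul]
  rfl

lemma line_lemma {f : GL2 F → k} (hf : f ∈ Ind F k (χ'.comp mulMonoidHom)) :
    f + heckeT F k f = (f 1 + ∑ c : F, f (wElt F * uElt F c)) • eZero χ' := by
  have hg : f + heckeT F k f ∈ Ind F k (χ'.comp mulMonoidHom) :=
    Submodule.add_mem _ hf (T_mem_Ind χ' hf)
  have hT1 : heckeT F k f 1 = ∑ c : F, f (wElt F * uElt F c) := by
    rw [heckeT_apply]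
    simp only [mul_one]
  have hg1 : (f + heckeT F k f) 1 = f 1 + ∑ c : F, f (wElt F * uElt F c) := by
    rw [Pi.add_apply, hT1]
  have hgw : ∀ m : F, (f + heckeT F k f) (wElt F * uElt F m)
      = f 1 + ∑ c : F, f (wElt F * uElt F c) := by
    intro m
    rw [Pi.add_apply, T_row χ' hf]
    ring
  funext x
  by_cases hx : (x : Matrix (Fin 2) (Fin 2) F) 1 0 = 0
  · rw [bruhat_app0 χ' hg hx, hg1]
    show _ = _ * eZero χ' x
    unfold eZero
    ring
  · rw [bruhat_app1 χ' hg hx, hgw]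
    show _ = _ * eZero χ' x
    unfold eZero
    ring

open scoped Classical in
/-- The model for `Im T`. -/
def Emap (χ' : Fˣ →* kˣ) : (F → k) →ₗ[k] (GL2 F → k) where
  toFun φ x := (χ' (Matrix.GeneralLinearGroup.det x) : k) *
    (if (x : Matrix (Fin 2) (Fin 2) F) 1 0 = 0 then -∑ c : F, φ c
     else φ ((x : Matrix (Fin 2) (Fin 2) F) 1 1 / (x : Matrix (Fin 2) (Fin 2) F) 1 0))
  map_add' φ ψ := by
    funext x
    by_cases hx : (x : Matrix (Fin 2) (Fin 2) F) 1 0 = 0 <;>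
      simp [hx, Finset.sum_add_distrib] <;> ring
  map_smul' t φ := by
    funext x
    by_cases hx : (x : Matrix (Fin 2) (Fin 2) F) 1 0 = 0
    · simp only [hx, if_true, eq_self_iff_true, Pi.smul_apply, smul_eq_mul, RingHom.id_apply,
        Finset.mul_sum, mul_neg]
      rw [neg_eq_iff_eq_neg, neg_neg]
      exact Finset.sum_congr rfl fun i _ => by ring
    · simp [hx]
      ring

open scoped Classical in
lemma Emap_apply (φ : F → k) (x : GL2 F) :
    Emap χ' φ x = (χ' (Matrix.GeneralLinearGroup.det x) : k) *
      (if (x : Matrix (Fin 2) (Fin 2) F) 1 0 = 0 then -∑ c : F, φ c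
       else φ ((x : Matrix (Fin 2) (Fin 2) F) 1 1 / (x : Matrix (Fin 2) (Fin 2) F) 1 0)) := rfl

lemma sum_moebius [DecidableEq F] (x00 x01 x10 x11 : F) (hx : x10 ≠ 0)
    (hD : x00 * x11 - x01 * x10 ≠ 0) (φ : F → k) :
    ∑ c ∈ Finset.univ.erase (-x00 / x10), φ ((x01 + c * x11) / (x00 + c * x10))
      = ∑ m ∈ Finset.univ.erase (x11 / x10), φ m := by
  have hden : ∀ c : F, c ≠ -x00 / x10 → x00 + c * x10 ≠ 0 := by
    intro c hc h
    apply hc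
    field_simp
    linear_combination h
  have hden2 : ∀ m : F, m ≠ x11 / x10 → x11 - m * x10 ≠ 0 := by
    intro m hm h
    apply hm
    field_simp
    linear_combination -h
  refine Finset.sum_bij' (fun c _ => (x01 + c * x11) / (x00 + c * x10))
    (fun m _ => (m * x00 - x01) / (x11 - m * x10)) ?_ ?_ ?_ ?_ ?_
  · intro c hc
    rw [Finset.mem_erase] at hc ⊢
    refine ⟨?_, Finset.mem_univ _⟩
    have h1 : x00 + c * x10 ≠ 0 := hden c hc.1
    intro h
    apply hD
    field_simp at h
    linear_combination -h
  · intro m hm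
    rw [Finset.mem_erase] at hm ⊢
    refine ⟨?_, Finset.mem_univ _⟩
    have h1 : x11 - m * x10 ≠ 0 := hden2 m hm.1
    intro h
    apply hD
    field_simp at h
    linear_combination h
  · intro c hc
    rw [Finset.mem_erase] at hc
    have h1 : x00 + c * x10 ≠ 0 := hden c hc.1
    show ((x01 + c * x11) / (x00 + c * x10) * x00 - x01) /
        (x11 - (x01 + c * x11) / (x00 + c * x10) * x10) = c
    have h2 : x11 - (x01 + c * x11) / (x00 + c * x10) * x10 =
        (x00 * x11 - x01 * x10) / (x00 + c * x10) := by
      field_simp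
      ring
    have h3 : (x01 + c * x11) / (x00 + c * x10) * x00 - x01 =
        c * (x00 * x11 - x01 * x10) / (x00 + c * x10) := by
      field_simp
      ring
    rw [h2, h3]
    field_simp
  · intro m hm
    rw [Finset.mem_erase] at hm
    have h1 : x11 - m * x10 ≠ 0 := hden2 m hm.1
    show (x01 + (m * x00 - x01) / (x11 - m * x10) * x11) /
        (x00 + (m * x00 - x01) / (x11 - m * x10) * x10) = m
    have h2 : x00 + (m * x00 - x01) / (x11 - m * x10) * x10 =
        (x00 * x11 - x01 * x10) / (x11 - m * x10) := by
      field_simp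
      ring
    have h3 : x01 + (m * x00 - x01) / (x11 - m * x10) * x11 =
        m * (x00 * x11 - x01 * x10) / (x11 - m * x10) := by
      field_simp
      ring
    rw [h2, h3]
    field_simp
  · intro c hc
    rfl

lemma Emap_mem (φ : F → k) : Emap χ' φ ∈ Ind F k (χ'.comp mulMonoidHom) := by
  intro a d e g
  have h10 : ((bElt F a d e * g : GL2 F) : Matrix (Fin 2) (Fin 2) F) 1 0
      = (d : F) * (g : Matrix (Fin 2) (Fin 2) F) 1 0 := by
    rw [Matrix.GeneralLinearGroup.coe_mul, coe_bElt,
      Matrix.eta_fin_two (g : Matrix (Fin 2) (Fin 2) F), Matrix.mul_fin_two]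
    simp
  have h11 : ((bElt F a d e * g : GL2 F) : Matrix (Fin 2) (Fin 2) F) 1 1
      = (d : F) * (g : Matrix (Fin 2) (Fin 2) F) 1 1 := by
    rw [Matrix.GeneralLinearGroup.coe_mul, coe_bElt,
      Matrix.eta_fin_two (g : Matrix (Fin 2) (Fin 2) F), Matrix.mul_fin_two]
    simp
  have hdet : Matrix.GeneralLinearGroup.det (bElt F a d e * g)
      = (a * d) * Matrix.GeneralLinearGroup.det g := by
    rw [_root_.map_mul, det_bElt]
  rw [Emap_apply, Emap_apply, chi_coe, h10, h11, hdet, _root_.map_mul, Units.val_mul]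
  by_cases hg : (g : Matrix (Fin 2) (Fin 2) F) 1 0 = 0
  · rw [if_pos (by rw [hg, mul_zero]), if_pos hg]
    ring
  · rw [if_neg (mul_ne_zero d.ne_zero hg), if_neg hg,
      mul_div_mul_left _ _ d.ne_zero]
    ring

lemma Emap_eval (φ : F → k) (c : F) : Emap χ' φ (wElt F * uElt F c) = φ c := by
  have hcoe : ((wElt F * uElt F c : GL2 F) : Matrix (Fin 2) (Fin 2) F) = !![0,1;-1,-c] := by
    rw [Matrix.GeneralLinearGroup.coe_mul, coe_wElt, coe_uElt, Matrix.mul_fin_two]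
    norm_num
  have hdet : Matrix.GeneralLinearGroup.det (wElt F * uElt F c) = 1 := by
    rw [_root_.map_mul, det_wElt, det_uElt, one_mul]
  rw [Emap_apply, hcoe, hdet]
  norm_num

lemma entries_ne_zero {x : GL2 F} (hx : (x : Matrix (Fin 2) (Fin 2) F) 1 0 = 0) :
    (x : Matrix (Fin 2) (Fin 2) F) 0 0 ≠ 0 ∧ (x : Matrix (Fin 2) (Fin 2) F) 1 1 ≠ 0 := by
  have hdet : ((Matrix.GeneralLinearGroup.det x : Fˣ) : F) ≠ 0 := Units.ne_zero _
  have hde : ((Matrix.GeneralLinearGroup.det x : Fˣ) : F) =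
      (x : Matrix (Fin 2) (Fin 2) F) 0 0 * (x : Matrix (Fin 2) (Fin 2) F) 1 1 := by
    rw [det_entries, hx]; ring
  exact ⟨fun h => hdet (by rw [hde, h, zero_mul]), fun h => hdet (by rw [hde, h, mul_zero])⟩

open scoped Classical in
lemma Emap_T (hq : (Fintype.card F : k) = 0) (φ : F → k) :
    heckeT F k (Emap χ' φ) = -(Emap χ' φ) := by
  funext x
  rw [heckeT_apply, Pi.neg_apply]
  have hterm : ∀ c : F, Emap χ' φ (wElt F * uElt F c * x) =
      (χ' (Matrix.GeneralLinearGroup.det x) : k) *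
        (if (x : Matrix (Fin 2) (Fin 2) F) 0 0 + c * (x : Matrix (Fin 2) (Fin 2) F) 1 0 = 0
         then -∑ c : F, φ c
         else φ (((x : Matrix (Fin 2) (Fin 2) F) 0 1 + c * (x : Matrix (Fin 2) (Fin 2) F) 1 1) /
            ((x : Matrix (Fin 2) (Fin 2) F) 0 0 + c * (x : Matrix (Fin 2) (Fin 2) F) 1 0))) := by
    intro c
    rw [Emap_apply, (wux_entries c x).1, (wux_entries c x).2, det_wux, neg_eq_zero]
    by_cases h : (x : Matrix (Fin 2) (Fin 2) F) 0 0 + c * (x : Matrix (Fin 2) (Fin 2) F) 1 0 = 0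
    · rw [if_pos h, if_pos h]
    · rw [if_neg h, if_neg h, neg_div_neg_eq]
  rw [Finset.sum_congr rfl fun c _ => hterm c]
  rw [Emap_apply]
  by_cases hx : (x : Matrix (Fin 2) (Fin 2) F) 1 0 = 0
  · obtain ⟨h00, h11⟩ := entries_ne_zero hx
    have : ∀ c : F, (if (x : Matrix (Fin 2) (Fin 2) F) 0 0 + c * (x : Matrix (Fin 2) (Fin 2) F) 1 0 = 0
         then -∑ c : F, φ c
         else φ (((x : Matrix (Fin 2) (Fin 2) F) 0 1 + c * (x : Matrix (Fin 2) (Fin 2) F) 1 1) /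
            ((x : Matrix (Fin 2) (Fin 2) F) 0 0 + c * (x : Matrix (Fin 2) (Fin 2) F) 1 0)))
        = φ (((x : Matrix (Fin 2) (Fin 2) F) 0 1 + c * (x : Matrix (Fin 2) (Fin 2) F) 1 1) /
            (x : Matrix (Fin 2) (Fin 2) F) 0 0) := by
      intro c
      rw [hx, mul_zero, add_zero, if_neg h00]
    rw [Finset.sum_congr rfl fun c _ => by rw [this c]]
    rw [← Finset.mul_sum]
    have hre : ∑ c : F, φ (((x : Matrix (Fin 2) (Fin 2) F) 0 1 +
          c * (x : Matrix (Fin 2) (Fin 2) F) 1 1) / (x : Matrix (Fin 2) (Fin 2) F) 0 0)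
        = ∑ m : F, φ m :=
      Equiv.sum_comp (affEquiv (Units.mk0 _ h00) (Units.mk0 _ h11)
        ((x : Matrix (Fin 2) (Fin 2) F) 0 1)) φ
    rw [hre, if_pos hx]
    ring
  · rw [if_neg hx]
    set x00 := (x : Matrix (Fin 2) (Fin 2) F) 0 0
    set x01 := (x : Matrix (Fin 2) (Fin 2) F) 0 1
    set x10 := (x : Matrix (Fin 2) (Fin 2) F) 1 0
    set x11 := (x : Matrix (Fin 2) (Fin 2) F) 1 1
    have hD : x00 * x11 - x01 * x10 ≠ 0 := by
      have := Units.ne_zero (Matrix.GeneralLinearGroup.det x)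
      rw [det_entries x] at this
      exact this
    rw [← Finset.add_sum_erase _ _ (Finset.mem_univ (-x00 / x10))]
    have hc0 : x00 + -x00 / x10 * x10 = 0 := by field_simp; ring
    rw [if_pos hc0]
    have hrest : ∀ c ∈ Finset.univ.erase (-x00 / x10),
        (χ' (Matrix.GeneralLinearGroup.det x) : k) *
          (if x00 + c * x10 = 0 then -∑ c : F, φ c
           else φ ((x01 + c * x11) / (x00 + c * x10)))
        = (χ' (Matrix.GeneralLinearGroup.det x) : k) * φ ((x01 + c * x11) / (x00 + c * x10)) := by
      intro c hc
      rw [Finset.mem_erase] at hc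
      have : x00 + c * x10 ≠ 0 := by
        intro h
        apply hc.1
        field_simp
        linear_combination h
      rw [if_neg this]
    rw [Finset.sum_congr rfl hrest, ← Finset.mul_sum,
      sum_moebius x00 x01 x10 x11 hx hD φ,
      Finset.sum_erase_eq_sub (Finset.mem_univ (x11 / x10))]
    ring

lemma heckeT_one (f : GL2 F → k) : heckeT F k f 1 = ∑ c : F, f (wElt F * uElt F c) := by
  rw [heckeT_apply]
  simp only [mul_one]

lemma T_sum_zero (hq : (Fintype.card F : k) = 0) {f : GL2 F → k}
    (hf : f ∈ Ind F k (χ'.comp mulMonoidHom)) :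
    heckeT F k f 1 + ∑ c : F, heckeT F k f (wElt F * uElt F c) = 0 := by
  rw [heckeT_one, Finset.sum_congr rfl fun m _ => T_row χ' hf m]
  rw [Finset.sum_sub_distrib, Finset.sum_const, Finset.card_univ, nsmul_eq_mul, hq, zero_mul]
  ring

open scoped Classical in
lemma eq_Emap {f : GL2 F → k} (hf : f ∈ Ind F k (χ'.comp mulMonoidHom))
    (h0 : f 1 + ∑ c : F, f (wElt F * uElt F c) = 0) :
    f = Emap χ' (fun c => f (wElt F * uElt F c)) := by
  funext x
  by_cases hx : (x : Matrix (Fin 2) (Fin 2) F) 1 0 = 0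
  · rw [bruhat_app0 χ' hf hx, Emap_apply, if_pos hx]
    congr 1
    linear_combination h0
  · rw [bruhat_app1 χ' hf hx, Emap_apply, if_neg hx]

lemma imT_eq (hq : (Fintype.card F : k) = 0) :
    Submodule.map (heckeT F k) (Ind F k (χ'.comp mulMonoidHom)) = LinearMap.range (Emap χ') := by
  apply le_antisymm
  · rintro _ ⟨f, hf, rfl⟩
    exact ⟨fun c => heckeT F k f (wElt F * uElt F c),
      (eq_Emap χ' (T_mem_Ind χ' hf) (T_sum_zero χ' hq hf)).symm⟩
  · rintro _ ⟨φ, rfl⟩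
    refine ⟨-(Emap χ' φ), Submodule.neg_mem _ (Emap_mem χ' φ), ?_⟩
    rw [map_neg, Emap_T χ' hq φ, neg_neg]

lemma T_T (hq : (Fintype.card F : k) = 0) {f : GL2 F → k}
    (hf : f ∈ Ind F k (χ'.comp mulMonoidHom)) :
    heckeT F k (heckeT F k f) = -(heckeT F k f) := by
  have : heckeT F k f ∈ LinearMap.range (Emap χ') := by
    rw [← imT_eq χ' hq]
    exact ⟨f, hf, rfl⟩
  obtain ⟨φ, hφ⟩ := this
  rw [← hφ, Emap_T χ' hq φ]

lemma Emap_injective : Function.Injective (Emap χ') := by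
  intro φ ψ h
  funext c
  rw [← Emap_eval χ' φ c, ← Emap_eval χ' ψ c, h]

/-- Twisting a function by a character of the determinant. -/
def twistBy (ψ : Fˣ →* kˣ) : (GL2 F → k) →ₗ[k] (GL2 F → k) where
  toFun f x := (ψ (Matrix.GeneralLinearGroup.det x) : k) * f x
  map_add' f g := by funext x; simp; ring
  map_smul' t f := by funext x; simp; ring

lemma twistBy_apply (ψ : Fˣ →* kˣ) (f : GL2 F → k) (x : GL2 F) :
    twistBy ψ f x = (ψ (Matrix.GeneralLinearGroup.det x) : k) * f x := rfl

lemma twistBy_twistBy (ψ : Fˣ →* kˣ) (f : GL2 F → k) :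
    twistBy ψ (twistBy ψ⁻¹ f) = f := by
  funext x
  rw [twistBy_apply, twistBy_apply, MonoidHom.inv_apply, ← mul_assoc]
  norm_num

lemma twistBy_hecke (ψ : Fˣ →* kˣ) (f : GL2 F → k) :
    twistBy ψ (heckeT F k f) = heckeT F k (twistBy ψ f) := by
  funext x
  rw [twistBy_apply, heckeT_apply, heckeT_apply, Finset.mul_sum]
  refine Finset.sum_congr rfl fun c _ => ?_
  rw [twistBy_apply, det_wux]

lemma twistBy_mem (ψ χ₀ : Fˣ →* kˣ) {f : GL2 F → k} (hf : f ∈ Ind F k (χ₀.comp mulMonoidHom)) :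
    twistBy ψ f ∈ Ind F k ((ψ * χ₀).comp mulMonoidHom) := by
  intro a d e g
  rw [twistBy_apply, twistBy_apply, hf a d e g, _root_.map_mul, det_bElt, _root_.map_mul,
    chi_coe, chi_coe]
  simp only [MonoidHom.mul_apply, Units.val_mul]
  ring

lemma twistBy_Ind_eq (ψ : Fˣ →* kˣ) :
    Submodule.map (twistBy ψ⁻¹) (Ind F k (ψ.comp mulMonoidHom)) = Ind F k 1 := by
  apply le_antisymm
  · rintro _ ⟨f, hf, rfl⟩
    have h := twistBy_mem ψ⁻¹ ψ hf
    rw [inv_mul_cancel ψ, MonoidHom.one_comp] at h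
    exact h
  · intro f hf
    have h1 : f ∈ Ind F k ((1 : Fˣ →* kˣ).comp mulMonoidHom) := by
      rw [MonoidHom.one_comp]; exact hf
    have h2 := twistBy_mem ψ 1 h1
    rw [mul_one ψ] at h2
    refine ⟨twistBy ψ f, h2, ?_⟩
    funext x
    rw [twistBy_apply, twistBy_apply, MonoidHom.inv_apply, ← mul_assoc, ← Units.val_mul,
      inv_mul_cancel, Units.val_one, one_mul]

end CharLemmas

end AuxLemmas

/-- for `χ = (χ' ∘ det)|_H` (so `χ^s = χ`), `Ind_B^Γ χ` is the internal direct
sum of the submodules `Im T_{n_s}` and `Im (1 + T_{n_s})`; `Im (1 + T_{n_s})` is the line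
spanned by `g ↦ χ'(det g)`, on which `Γ` acts through `χ' ∘ det`; consequently `Im T_{n_s}`
has dimension `q`; and `Im T_{n_s} ≅ St ⊗ (χ' ∘ det)` where `St` is the image of `T_{n_s}`
on `Ind_B^Γ 𝟙`. -/
theorem stmt_1 (p n : ℕ) [Fact p.Prime] (hn : 1 ≤ n) (hF : Fintype.card F = p ^ n)
    [IsAlgClosed k] [CharP k p]
    (χ' : Fˣ →* kˣ) :
    -- `Im T_{n_s}` and `Im (1 + T_{n_s})` are submodules of `Ind_B^Γ χ` …
    Submodule.map (heckeT F k) (Ind F k (χ'.comp mulMonoidHom)) ≤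
        Ind F k (χ'.comp mulMonoidHom) ∧
    Submodule.map (LinearMap.id + heckeT F k) (Ind F k (χ'.comp mulMonoidHom)) ≤
        Ind F k (χ'.comp mulMonoidHom) ∧
    -- … and `Ind_B^Γ χ` is their internal direct sum
    Submodule.map (heckeT F k) (Ind F k (χ'.comp mulMonoidHom)) ⊓
        Submodule.map (LinearMap.id + heckeT F k) (Ind F k (χ'.comp mulMonoidHom)) = ⊥ ∧
    Submodule.map (heckeT F k) (Ind F k (χ'.comp mulMonoidHom)) ⊔
        Submodule.map (LinearMap.id + heckeT F k) (Ind F k (χ'.comp mulMonoidHom)) =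
      Ind F k (χ'.comp mulMonoidHom) ∧
    -- `Im (1 + T_{n_s})` is the line spanned by `g ↦ χ'(det g)`
    Submodule.map (LinearMap.id + heckeT F k) (Ind F k (χ'.comp mulMonoidHom)) =
      Submodule.span k {fun g : GL2 F => (χ' (Matrix.GeneralLinearGroup.det g) : k)} ∧
    -- on which `Γ` acts through the character `χ' ∘ det`
    (∀ g : GL2 F,
      rt F k g (fun x : GL2 F => (χ' (Matrix.GeneralLinearGroup.det x) : k)) =
        (χ' (Matrix.GeneralLinearGroup.det g) : k) •
          fun x : GL2 F => (χ' (Matrix.GeneralLinearGroup.det x) : k)) ∧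
    -- consequently `Im T_{n_s}` has dimension `q`
    Module.finrank k ↥(Submodule.map (heckeT F k) (Ind F k (χ'.comp mulMonoidHom))) =
      Fintype.card F ∧
    -- and `Im T_{n_s} ≅ St ⊗ (χ' ∘ det)` as `k[Γ]`-modules
    (∃ e : (GL2 F → k) →ₗ[k] (GL2 F → k),
      (∀ (g : GL2 F), ∀ f ∈ Submodule.map (heckeT F k) (Ind F k (χ'.comp mulMonoidHom)),
        e (rt F k g f) = (χ' (Matrix.GeneralLinearGroup.det g) : k) • rt F k g (e f)) ∧
      (∀ f ∈ Submodule.map (heckeT F k) (Ind F k (χ'.comp mulMonoidHom)), e f = 0 → f = 0) ∧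
      Submodule.map e (Submodule.map (heckeT F k) (Ind F k (χ'.comp mulMonoidHom))) =
        Submodule.map (heckeT F k) (Ind F k 1)) := by
  have hq : (Fintype.card F : k) = 0 := by
    rw [hF, Nat.cast_pow, CharP.cast_eq_zero k p, zero_pow (by omega)]
  have idT_apply : ∀ f : GL2 F → k,
      (LinearMap.id + heckeT F k : (GL2 F → k) →ₗ[k] (GL2 F → k)) f = f + heckeT F k f :=
    fun f => rfl
  have part1 : Submodule.map (heckeT F k) (Ind F k (χ'.comp mulMonoidHom)) ≤
      Ind F k (χ'.comp mulMonoidHom) := by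
    rintro _ ⟨f, hf, rfl⟩
    exact T_mem_Ind χ' hf
  have part2 : Submodule.map (LinearMap.id + heckeT F k) (Ind F k (χ'.comp mulMonoidHom)) ≤
      Ind F k (χ'.comp mulMonoidHom) := by
    rintro _ ⟨f, hf, rfl⟩
    rw [idT_apply]
    exact Submodule.add_mem _ hf (T_mem_Ind χ' hf)
  have part3 : Submodule.map (heckeT F k) (Ind F k (χ'.comp mulMonoidHom)) ⊓
      Submodule.map (LinearMap.id + heckeT F k) (Ind F k (χ'.comp mulMonoidHom)) = ⊥ := by
    rw [eq_bot_iff]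
    rintro v ⟨hv1, hv2⟩
    obtain ⟨f, hf, hvf⟩ := hv1
    obtain ⟨g, hg, hvg⟩ := hv2
    have h1 : v + heckeT F k v = 0 := by
      rw [← hvf, T_T χ' hq hf, add_neg_cancel]
    have h2 : heckeT F k v = 0 := by
      rw [← hvg, idT_apply, map_add, T_T χ' hq hg, add_neg_cancel]
    have hv0 : v = 0 := by
      rw [h2, add_zero] at h1
      exact h1
    simp [hv0]
  have part4 : Submodule.map (heckeT F k) (Ind F k (χ'.comp mulMonoidHom)) ⊔
      Submodule.map (LinearMap.id + heckeT F k) (Ind F k (χ'.comp mulMonoidHom)) =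
      Ind F k (χ'.comp mulMonoidHom) := by
    apply le_antisymm (sup_le part1 part2)
    intro f hf
    rw [Submodule.mem_sup]
    refine ⟨heckeT F k (-f), ⟨-f, Submodule.neg_mem _ hf, rfl⟩,
      (LinearMap.id + heckeT F k : (GL2 F → k) →ₗ[k] (GL2 F → k)) f, ⟨f, hf, rfl⟩, ?_⟩
    rw [map_neg, idT_apply]
    abel
  have part5 : Submodule.map (LinearMap.id + heckeT F k) (Ind F k (χ'.comp mulMonoidHom)) =
      Submodule.span k {fun g : GL2 F => (χ' (Matrix.GeneralLinearGroup.det g) : k)} := by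
    apply le_antisymm
    · rintro _ ⟨f, hf, rfl⟩
      rw [idT_apply, line_lemma χ' hf]
      exact Submodule.smul_mem _ _ (Submodule.mem_span_singleton_self _)
    · rw [Submodule.span_le, Set.singleton_subset_iff]
      exact ⟨eZero χ', eZero_mem χ', by rw [idT_apply, T_eZero χ' hq, add_zero]; rfl⟩
  have part6 : ∀ g : GL2 F,
      rt F k g (fun x : GL2 F => (χ' (Matrix.GeneralLinearGroup.det x) : k)) =
        (χ' (Matrix.GeneralLinearGroup.det g) : k) •
          fun x : GL2 F => (χ' (Matrix.GeneralLinearGroup.det x) : k) := by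
    intro g
    funext x
    show (χ' (Matrix.GeneralLinearGroup.det (x * g)) : k) = _
    rw [Pi.smul_apply, smul_eq_mul, _root_.map_mul, _root_.map_mul, Units.val_mul]
    ring
  have part7 : Module.finrank k
      ↥(Submodule.map (heckeT F k) (Ind F k (χ'.comp mulMonoidHom))) = Fintype.card F := by
    rw [imT_eq χ' hq, ← (LinearEquiv.ofInjective (Emap χ') (Emap_injective χ')).finrank_eq]
    exact Module.finrank_fintype_fun_eq_card k
  refine ⟨part1, part2, part3, part4, part5, part6, part7, twistBy χ'⁻¹, ?_, ?_, ?_⟩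
  · intro g f hf
    funext x
    show ((χ'⁻¹ (Matrix.GeneralLinearGroup.det x) : kˣ) : k) * f (x * g) = _
    rw [Pi.smul_apply, smul_eq_mul]
    show _ = (χ' (Matrix.GeneralLinearGroup.det g) : k) *
      (((χ'⁻¹ (Matrix.GeneralLinearGroup.det (x * g)) : kˣ) : k) * f (x * g))
    have h1 : ((χ' (Matrix.GeneralLinearGroup.det g) : kˣ) : k) ≠ 0 := Units.ne_zero _
    have h2 : ((χ' (Matrix.GeneralLinearGroup.det x) : kˣ) : k) ≠ 0 := Units.ne_zero _
    rw [MonoidHom.inv_apply, MonoidHom.inv_apply, _root_.map_mul,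
      Units.val_inv_eq_inv_val, Units.val_inv_eq_inv_val, _root_.map_mul, Units.val_mul]
    field_simp
  · intro f hf hef
    funext x
    have h := congrFun hef x
    rw [twistBy_apply] at h
    have hne : ((χ'⁻¹ (Matrix.GeneralLinearGroup.det x) : kˣ) : k) ≠ 0 := Units.ne_zero _
    have h0 : ((χ'⁻¹ (Matrix.GeneralLinearGroup.det x) : kˣ) : k) * f x = 0 := h
    exact (mul_eq_zero.mp h0).resolve_left hne
  · rw [← Submodule.map_comp]
    have hcomm : (twistBy (χ'⁻¹ : Fˣ →* kˣ)).comp (heckeT F k) =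
        (heckeT F k).comp (twistBy χ'⁻¹) := by
      apply LinearMap.ext
      intro f
      exact twistBy_hecke χ'⁻¹ f
    rw [hcomm, Submodule.map_comp, twistBy_Ind_eq χ']

end
end

section
/- Let χ' : 𝔽_qˣ → kˣ be a character and let χ be the restriction of χ'∘det to H (so χ^s = χ). Let M be a k[Γ]-module and v ∈ M a nonzero vector such that u·v = v for all u ∈ U, h·v = χ(h)·v for all h ∈ H, and Σ_{λ∈𝔽_q} u_λ·(n_s⁻¹·v) = −v. Then the k[Γ]-submodule of M generated by v is isomorphic to Im(T_{n_s} : Ind_B^Γ χ → Ind_B^Γ χ); in particular it has dimension q over k. -/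
open Matrix

set_option maxHeartbeats 1000000
set_option synthInstance.maxHeartbeats 400000
set_option linter.unusedSectionVars false

noncomputable section

variable (F : Type) [Field F] [Fintype F] (k : Type) [Field k]

namespace Stmt3
open scoped Classical
variable {F k}

@[simp] lemma coe_uElt (c : F) : (uElt F c : Matrix (Fin 2) (Fin 2) F) = !![1, c; 0, 1] := rfl
@[simp] lemma coe_bElt (a d : Fˣ) (c : F) :
    (bElt F a d c : Matrix (Fin 2) (Fin 2) F) = !![(a:F), c; 0, (d:F)] := rfl
@[simp] lemma coe_nsElt : (nsElt F : Matrix (Fin 2) (Fin 2) F) = !![0, -1; 1, 0] := rfl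
lemma coe_mul (g h : GL2 F) :
    ((g * h : GL2 F) : Matrix (Fin 2) (Fin 2) F) = (g : Matrix (Fin 2) (Fin 2) F) * h := rfl
lemma coe_one : ((1 : GL2 F) : Matrix (Fin 2) (Fin 2) F) = 1 := rfl
lemma gl2_ext {g h : GL2 F} (hgh : (g : Matrix (Fin 2) (Fin 2) F) = h) : g = h := Units.ext hgh
lemma mul_ent (A B : Matrix (Fin 2) (Fin 2) F) (i j : Fin 2) :
    (A * B) i j = A i 0 * B 0 j + A i 1 * B 1 j := by
  rw [Matrix.mul_apply, Fin.sum_univ_two]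
lemma uElt_mul (c c' : F) : uElt F c * uElt F c' = uElt F (c + c') := by
  apply gl2_ext; rw [coe_mul]; simp [Matrix.mul_fin_two]; ring_nf

/-- coset representative of the coset indexed by `c`. -/
def cRep (c : F) : GL2 F := nsElt F * uElt F c

@[simp] lemma coe_cRep (c : F) : (cRep c : Matrix (Fin 2) (Fin 2) F) = !![0, -1; 1, c] := by
  show ((nsElt F : Matrix (Fin 2) (Fin 2) F) * uElt F c) = _
  simp [Matrix.mul_fin_two]

def iota : Option F → GL2 F := fun o => o.elim 1 cRep
@[simp] lemma iota_none : (iota none : GL2 F) = 1 := rfl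
@[simp] lemma iota_some (c : F) : iota (some c) = cRep c := rfl

def lo (g : GL2 F) : F := (g : Matrix (Fin 2) (Fin 2) F) 1 0
def hi (g : GL2 F) : F := (g : Matrix (Fin 2) (Fin 2) F) 1 1
def detv (g : GL2 F) : F := (g : Matrix (Fin 2) (Fin 2) F).det

lemma detv_ne_zero (g : GL2 F) : detv g ≠ 0 := by
  have : detv g * (↑g⁻¹ : Matrix (Fin 2) (Fin 2) F).det = 1 := by
    rw [detv, ← Matrix.det_mul, ← coe_mul, mul_inv_cancel, coe_one, Matrix.det_one]
  intro h0; rw [h0, zero_mul] at this; exact zero_ne_one this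

lemma detv_mul (g h : GL2 F) : detv (g * h) = detv g * detv h := by
  rw [detv, detv, detv, coe_mul, Matrix.det_mul]
@[simp] lemma detv_one : detv (1 : GL2 F) = 1 := by rw [detv, coe_one, Matrix.det_one]
@[simp] lemma detv_cRep (c : F) : detv (cRep c) = 1 := by
  rw [detv, coe_cRep, Matrix.det_fin_two_of]; ring
@[simp] lemma detv_uElt (c : F) : detv (uElt F c) = 1 := by
  rw [detv, coe_uElt, Matrix.det_fin_two_of]; ring
@[simp] lemma detv_bElt (a d : Fˣ) (c : F) : detv (bElt F a d c) = (a : F) * d := by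
  rw [detv, coe_bElt, Matrix.det_fin_two_of]; ring
@[simp] lemma detv_iota (o : Option F) : detv (iota o : GL2 F) = 1 := by cases o <;> simp

lemma detv_eq (g : GL2 F) :
    detv g = (g : Matrix (Fin 2) (Fin 2) F) 0 0 * hi g - (g : Matrix (Fin 2) (Fin 2) F) 0 1 * lo g :=
  Matrix.det_fin_two _

@[simp] lemma lo_one : lo (1 : GL2 F) = 0 := by
  show (1 : Matrix (Fin 2) (Fin 2) F) 1 0 = 0; simp
@[simp] lemma lo_cRep (c : F) : lo (cRep c) = 1 := by
  rw [lo, coe_cRep]; simp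
@[simp] lemma hi_cRep (c : F) : hi (cRep c) = c := by
  rw [hi, coe_cRep]; simp

lemma lo_bElt_mul (a d : Fˣ) (b : F) (g : GL2 F) : lo (bElt F a d b * g) = d * lo g := by
  rw [lo, lo, coe_mul, mul_ent, coe_bElt]; simp
lemma hi_bElt_mul (a d : Fˣ) (b : F) (g : GL2 F) : hi (bElt F a d b * g) = d * hi g := by
  rw [hi, hi, coe_mul, mul_ent, coe_bElt]; simp

def idx (g : GL2 F) : Option F := if lo g = 0 then none else some (hi g / lo g)

@[simp] lemma idx_iota (o : Option F) : idx (iota o : GL2 F) = o := by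
  cases o <;> simp [idx]

lemma idx_bElt_mul (a d : Fˣ) (b : F) (g : GL2 F) : idx (bElt F a d b * g) = idx g := by
  rw [idx, idx, lo_bElt_mul, hi_bElt_mul]
  rcases eq_or_ne (lo g) 0 with h | h
  · simp [h]
  · rw [if_neg (by simp [h, d.ne_zero]), if_neg h, mul_div_mul_left _ _ d.ne_zero]

lemma idx_eq_none {g : GL2 F} (h : lo g = 0) : idx g = none := by simp [idx, h]
lemma idx_eq_some {g : GL2 F} (h : lo g ≠ 0) : idx g = some (hi g / lo g) := by simp [idx, h]

lemma bElt_mul_cRep (a d : Fˣ) (b c : F) :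
    ((bElt F a d b * cRep c : GL2 F) : Matrix (Fin 2) (Fin 2) F) =
      !![b, -(a:F) + b * c; (d:F), (d:F) * c] := by
  rw [coe_mul, coe_bElt, coe_cRep, Matrix.mul_fin_two]
  congr 1 <;> ring_nf

/-- The Bruhat-type decomposition. -/
lemma decomp (g : GL2 F) : ∃ (a d : Fˣ) (b : F),
    g = bElt F a d b * iota (idx g) ∧ ((a : F) * d = detv g) := by
  rcases eq_or_ne (lo g) 0 with h | h
  · have hdet : detv g = (g : Matrix (Fin 2) (Fin 2) F) 0 0 * hi g := by
      rw [detv_eq, h, mul_zero, sub_zero]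
    have h00 : (g : Matrix (Fin 2) (Fin 2) F) 0 0 ≠ 0 :=
      fun h0 => detv_ne_zero g (by rw [hdet, h0, zero_mul])
    have h11 : hi g ≠ 0 := fun h0 => detv_ne_zero g (by rw [hdet, h0, mul_zero])
    refine ⟨Units.mk0 _ h00, Units.mk0 _ h11, (g : Matrix (Fin 2) (Fin 2) F) 0 1, ?_, hdet.symm⟩
    apply gl2_ext
    rw [idx_eq_none h, iota_none, mul_one, coe_bElt]
    ext i j
    fin_cases i <;> fin_cases j
    · simp
    · simp
    · simpa [lo] using h
    · simp [hi]
  · refine ⟨Units.mk0 (detv g / lo g) (div_ne_zero (detv_ne_zero g) h), Units.mk0 (lo g) h,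
      (g : Matrix (Fin 2) (Fin 2) F) 0 0, ?_, div_mul_cancel₀ _ h⟩
    apply gl2_ext
    rw [idx_eq_some h, iota_some, bElt_mul_cRep]
    ext i j
    fin_cases i <;> fin_cases j
    · simp
    · simp
      rw [detv_eq]
      field_simp
      ring
    · simp [lo]
    · simp
      rw [mul_comm, div_mul_cancel₀ _ h]
      rfl

lemma uElt_zero : uElt F (0 : F) = 1 := by
  apply gl2_ext; rw [coe_uElt, coe_one, Matrix.one_fin_two]

lemma uElt_inv (c : F) : (uElt F c)⁻¹ = uElt F (-c) := by
  apply inv_eq_of_mul_eq_one_right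
  rw [uElt_mul, add_neg_cancel, uElt_zero]

lemma uElt_eq_bElt (c : F) : uElt F c = bElt F 1 1 c := by
  apply gl2_ext; simp

lemma bElt_inv (a d : Fˣ) (b : F) :
    (bElt F a d b)⁻¹ = bElt F a⁻¹ d⁻¹ (-((a:F)⁻¹ * b * (d:F)⁻¹)) := by
  apply inv_eq_of_mul_eq_one_right
  apply gl2_ext
  have ha : (a:F) ≠ 0 := a.ne_zero
  have hd : (d:F) ≠ 0 := d.ne_zero
  rw [coe_mul, coe_bElt, coe_bElt, Matrix.mul_fin_two, coe_one, Matrix.one_fin_two,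
    Units.val_inv_eq_inv_val, Units.val_inv_eq_inv_val]
  ext i j
  fin_cases i <;> fin_cases j <;> simp [ha, hd] <;> field_simp <;> ring

lemma nsElt_inv : (nsElt F)⁻¹ = hElt F (-1) (-1) * nsElt F := by
  apply inv_eq_of_mul_eq_one_right
  apply gl2_ext
  rw [coe_mul, coe_mul, hElt, coe_bElt, coe_nsElt, coe_one, Matrix.one_fin_two,
    Matrix.mul_fin_two, Matrix.mul_fin_two]
  norm_num

lemma cRep_inv (c : F) : (cRep c)⁻¹ = uElt F (-c) * (nsElt F)⁻¹ := by
  rw [cRep, _root_.mul_inv_rev, uElt_inv]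

lemma cRep_mul_uElt (c l : F) : cRep c * uElt F l = cRep (c + l) := by
  rw [cRep, mul_assoc, uElt_mul, cRep]

lemma bElt_eq (a d : Fˣ) (b : F) : bElt F a d b = hElt F a d * uElt F ((a:F)⁻¹ * b) := by
  apply gl2_ext
  rw [coe_mul, hElt, coe_bElt, coe_uElt, coe_bElt, Matrix.mul_fin_two]
  congr 1 <;> simp [← mul_assoc, mul_inv_cancel₀ a.ne_zero]

variable (χ' : Fˣ →* kˣ)

/-- extension of `χ'` by zero. -/
def X : F → k := fun x => if hx : x = 0 then 0 else χ' (Units.mk0 x hx)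

lemma X_unit (u : Fˣ) : X χ' (u : F) = χ' u := by
  have h : Units.mk0 (u : F) u.ne_zero = u := Units.ext rfl
  rw [X, dif_neg u.ne_zero, h]

@[simp] lemma X_one : X χ' (1 : F) = 1 := by simpa using X_unit χ' 1

lemma X_mul (x y : F) : X χ' (x * y) = X χ' x * X χ' y := by
  rcases eq_or_ne x 0 with rfl | hx
  · simp [X]
  rcases eq_or_ne y 0 with rfl | hy
  · simp [X]
  have h : Units.mk0 (x * y) (mul_ne_zero hx hy) = Units.mk0 x hx * Units.mk0 y hy :=
    Units.ext rfl
  rw [X, dif_neg (mul_ne_zero hx hy), h, _root_.map_mul, X, dif_neg hx, X, dif_neg hy, Units.val_mul]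

/-- the function `f₀` supported on `B`. -/
def f0 : GL2 F → k := fun g => if lo g = 0 then X χ' (detv g) else 0

/-- the function `f_D = χ' ∘ det`. -/
def fD : GL2 F → k := fun g => X χ' (detv g)

@[simp] lemma f0_one : f0 χ' (1 : GL2 F) = 1 := by rw [f0]; simp
@[simp] lemma f0_cRep (c : F) : f0 χ' (cRep c) = 0 := by rw [f0]; simp
@[simp] lemma fD_one : fD χ' (1 : GL2 F) = 1 := by rw [fD]; simp
@[simp] lemma fD_cRep (c : F) : fD χ' (cRep c) = 1 := by rw [fD]; simp

lemma chi_apply (a d : Fˣ) : (χ'.comp mulMonoidHom) (a, d) = χ' (a * d) := rfl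

lemma mem_Ind_iff (f : GL2 F → k) :
    f ∈ Ind F k (χ'.comp mulMonoidHom) ↔
      ∀ (a d : Fˣ) (c : F) (g : GL2 F), f (bElt F a d c * g) = (χ' (a * d) : k) * f g :=
  Iff.rfl

lemma X_detv_bElt_mul (a d : Fˣ) (b : F) (g : GL2 F) :
    X χ' (detv (bElt F a d b * g)) = (χ' (a * d) : k) * X χ' (detv g) := by
  rw [detv_mul, X_mul, detv_bElt, ← Units.val_mul, X_unit]

lemma fD_mem : fD χ' ∈ Ind F k (χ'.comp mulMonoidHom) := by
  intro a d c g
  rw [chi_apply]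
  exact X_detv_bElt_mul χ' a d c g

lemma f0_mem : f0 χ' ∈ Ind F k (χ'.comp mulMonoidHom) := by
  intro a d c g
  rw [chi_apply, f0, f0, lo_bElt_mul]
  rcases eq_or_ne (lo g) 0 with h | h
  · rw [if_pos (by rw [h, mul_zero]), if_pos h, X_detv_bElt_mul]
  · rw [if_neg (by simp [h, d.ne_zero]), if_neg h, mul_zero]

lemma eval_Ind {f : GL2 F → k} (hf : f ∈ Ind F k (χ'.comp mulMonoidHom)) (g : GL2 F) :
    f g = X χ' (detv g) * f (iota (idx g)) := by
  obtain ⟨a, d, b, hg, had⟩ := decomp g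
  conv_lhs => rw [hg]
  rw [hf a d b (iota (idx g)), chi_apply]
  congr 1
  rw [← X_unit χ' (a * d), Units.val_mul, had]

lemma Ind_ext {f f' : GL2 F → k} (hf : f ∈ Ind F k (χ'.comp mulMonoidHom))
    (hf' : f' ∈ Ind F k (χ'.comp mulMonoidHom)) (h1 : f 1 = f' 1)
    (hc : ∀ c : F, f (cRep c) = f' (cRep c)) : f = f' := by
  funext g
  rw [eval_Ind χ' hf g, eval_Ind χ' hf' g]
  cases h : idx g <;> simp [h1, hc _]

lemma rt_apply (g : GL2 F) (f : GL2 F → k) (x : GL2 F) : rt F k g f x = f (x * g) := rfl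

lemma rt_mem {f : GL2 F → k} {χ : (Fˣ × Fˣ) →* kˣ} (hf : f ∈ Ind F k χ) (g : GL2 F) :
    rt F k g f ∈ Ind F k χ := by
  intro a d c x
  rw [rt_apply, rt_apply, mul_assoc]
  exact hf a d c (x * g)

variable {M : Type} [AddCommGroup M] [Module k M]

/-- The Frobenius-reciprocity map `Ind χ → M` attached to a vector `v`. -/
def theta (ρ : Representation k (GL2 F) M) (v : M) : (GL2 F → k) →ₗ[k] M where
  toFun f := ∑ o : Option F, f (iota o) • ρ (iota o)⁻¹ v
  map_add' f g := by simp [add_smul, Finset.sum_add_distrib]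
  map_smul' t f := by simp [Finset.smul_sum, smul_smul]

variable {ρ : Representation k (GL2 F) M} {v : M}

lemma rho_bElt (hU : ∀ c : F, ρ (uElt F c) v = v)
    (hH : ∀ a d : Fˣ, ρ (hElt F a d) v = (χ' (a * d) : k) • v)
    (a d : Fˣ) (b : F) : ρ (bElt F a d b) v = (χ' (a * d) : k) • v := by
  rw [bElt_eq, _root_.map_mul, Module.End.mul_apply, hU, hH]

lemma theta_f0 : theta ρ v (f0 χ') = v := by
  show ∑ o : Option F, f0 χ' (iota o) • ρ (iota o)⁻¹ v = v
  rw [Fintype.sum_option]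
  simp

lemma theta_comm (hU : ∀ c : F, ρ (uElt F c) v = v)
    (hH : ∀ a d : Fˣ, ρ (hElt F a d) v = (χ' (a * d) : k) • v)
    {f : GL2 F → k} (hf : f ∈ Ind F k (χ'.comp mulMonoidHom)) (g : GL2 F) :
    theta ρ v (rt F k g f) = ρ g (theta ρ v f) := by
  have key : ∀ (h g : GL2 F), idx (iota (idx (h * g)) * g⁻¹) = idx h := by
    intro h g
    obtain ⟨a, d, b, hdec, -⟩ := decomp (h * g)
    set o' := idx (h * g) with ho'
    have h3 : iota o' = (bElt F a d b)⁻¹ * (h * g) := by rw [hdec, inv_mul_cancel_left]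
    have h2 : iota o' * g⁻¹ = (bElt F a d b)⁻¹ * h := by
      rw [h3, mul_assoc, mul_inv_cancel_right]
    rw [h2, bElt_inv, idx_bElt_mul]
  have hbij : Function.Bijective (fun o : Option F => idx (iota o * g)) := by
    apply Function.bijective_iff_has_inverse.mpr
    refine ⟨fun o => idx (iota o * g⁻¹), fun o => ?_, fun o => ?_⟩
    · show idx (iota (idx (iota o * g)) * g⁻¹) = o
      rw [key (iota o) g, idx_iota]
    · show idx (iota (idx (iota o * g⁻¹)) * g) = o
      have h5 := key (iota o) g⁻¹
      rw [inv_inv] at h5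
      rw [h5, idx_iota]
  have per : ∀ o : Option F,
      (rt F k g f) (iota o) • ρ (iota o)⁻¹ v
        = f (iota (idx (iota o * g))) • ρ (g * (iota (idx (iota o * g)))⁻¹) v := by
    intro o
    obtain ⟨a, d, b, hdec, -⟩ := decomp (iota o * g)
    set o' := idx (iota o * g) with ho'
    have h3 : iota o' = (bElt F a d b)⁻¹ * (iota o * g) := by rw [hdec, inv_mul_cancel_left]
    have h4 : g * (iota o')⁻¹ = (iota o)⁻¹ * bElt F a d b := by
      rw [h3]; group
    have h5 : (rt F k g f) (iota o) = (χ' (a * d) : k) * f (iota o') := by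
      rw [rt_apply, hdec]; exact hf a d b (iota o')
    rw [h5, h4, ρ.map_mul, Module.End.mul_apply, rho_bElt χ' hU hH, LinearMap.map_smul,
      smul_smul, mul_comm]
  calc theta ρ v (rt F k g f)
      = ∑ o : Option F, (rt F k g f) (iota o) • ρ (iota o)⁻¹ v := rfl
    _ = ∑ o : Option F, f (iota o) • ρ (g * (iota o)⁻¹) v :=
        Fintype.sum_bijective _ hbij _ _ per
    _ = ρ g (theta ρ v f) := by
        show _ = ρ g (∑ o : Option F, f (iota o) • ρ (iota o)⁻¹ v)
        rw [map_sum]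
        refine Finset.sum_congr rfl fun o _ => ?_
        rw [LinearMap.map_smul, ρ.map_mul, Module.End.mul_apply]

lemma theta_fD (hsum : ∑ c : F, ρ (uElt F c) (ρ ((nsElt F)⁻¹) v) = -v) :
    theta ρ v (fD χ') = 0 := by
  have h2 : ∑ c : F, ρ ((cRep c)⁻¹) v = -v := by
    rw [← hsum]
    exact Fintype.sum_equiv (Equiv.neg F) _ _ (fun c => by
      rw [cRep_inv, ρ.map_mul, Module.End.mul_apply, Equiv.neg_apply])
  show ∑ o : Option F, fD χ' (iota o) • ρ (iota o)⁻¹ v = 0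
  rw [Fintype.sum_option]
  simp only [iota_none, iota_some, fD_one, fD_cRep, one_smul, inv_one, _root_.map_one,
    Module.End.one_apply]
  rw [h2, add_neg_cancel]

lemma theta_map (hU : ∀ c : F, ρ (uElt F c) v = v)
    (hH : ∀ a d : Fˣ, ρ (hElt F a d) v = (χ' (a * d) : k) • v) :
    Submodule.map (theta ρ v) (Ind F k (χ'.comp mulMonoidHom)) =
      Submodule.span k (Set.range fun g : GL2 F => ρ g v) := by
  apply le_antisymm
  · rintro x ⟨f, hf, rfl⟩
    show ∑ o : Option F, f (iota o) • ρ (iota o)⁻¹ v ∈ _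
    apply Submodule.sum_mem
    intro o _
    exact Submodule.smul_mem _ _ (Submodule.subset_span ⟨(iota o)⁻¹, rfl⟩)
  · rw [Submodule.span_le]
    rintro x ⟨g, rfl⟩
    refine ⟨rt F k g (f0 χ'), rt_mem (f0_mem χ') g, ?_⟩
    rw [theta_comm χ' hU hH (f0_mem χ') g, theta_f0]

lemma lo_bElt (a d : Fˣ) (b : F) : lo (bElt F a d b) = 0 := by
  rw [lo, coe_bElt]; simp

lemma detv_inv (g : GL2 F) : detv g⁻¹ = (detv g)⁻¹ := by
  have h : detv g * detv g⁻¹ = 1 := by rw [← detv_mul, mul_inv_cancel, detv_one]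
  field_simp [detv_ne_zero g, eq_comm] at h ⊢
  rw [mul_comm] at h
  linear_combination h

lemma f0_mul_inv_iota (g : GL2 F) (o : Option F) :
    f0 χ' (g * (iota o)⁻¹) = if idx g = o then X χ' (detv g) else 0 := by
  rcases eq_or_ne (idx g) o with h | h
  · rw [if_pos h]
    obtain ⟨a, d, b, hdec, had⟩ := decomp g
    rw [h] at hdec
    have h2 : g * (iota o)⁻¹ = bElt F a d b := by rw [hdec, mul_inv_cancel_right]
    rw [h2, f0, if_pos (lo_bElt a d b), detv_bElt, had]
  · rw [if_neg h, f0]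
    rw [if_neg ?hlo]
    case hlo =>
      intro hlo
      obtain ⟨a, d, b, hdec, -⟩ := decomp (g * (iota o)⁻¹)
      rw [idx_eq_none hlo, iota_none, mul_one] at hdec
      apply h
      have h3 : g = bElt F a d b * iota o := by rw [← hdec, inv_mul_cancel_right]
      rw [h3, idx_bElt_mul, idx_iota]

lemma theta_id {f : GL2 F → k} (hf : f ∈ Ind F k (χ'.comp mulMonoidHom)) :
    theta (rt F k) (f0 χ') f = f := by
  funext g
  calc theta (rt F k) (f0 χ') f g
      = ∑ o : Option F, f (iota o) * f0 χ' (g * (iota o)⁻¹) := by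
        show (∑ o : Option F, f (iota o) • rt F k (iota o)⁻¹ (f0 χ')) g = _
        rw [Finset.sum_apply]
        rfl
    _ = ∑ o : Option F, f (iota o) * (if idx g = o then X χ' (detv g) else 0) := by
        refine Finset.sum_congr rfl fun o _ => ?_
        rw [f0_mul_inv_iota]
    _ = f (iota (idx g)) * X χ' (detv g) := by
        simp [mul_ite, Finset.sum_ite_eq]
    _ = f g := by rw [mul_comm, ← eval_Ind χ' hf g]

lemma lo_mul_bElt (g : GL2 F) (a d : Fˣ) (b : F) : lo (g * bElt F a d b) = (a:F) * lo g := by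
  rw [lo, lo, coe_mul, mul_ent, coe_bElt]
  simp [mul_comm]

lemma detv_nsElt : detv (nsElt F) = 1 := by
  rw [detv, coe_nsElt, Matrix.det_fin_two_of]; ring

lemma coe_ns_inv : (((nsElt F)⁻¹ : GL2 F) : Matrix (Fin 2) (Fin 2) F) = !![0, 1; -1, 0] := by
  rw [nsElt_inv, coe_mul, hElt, coe_bElt, coe_nsElt, Matrix.mul_fin_two]
  norm_num

lemma f0_rt_uElt (c : F) : rt F k (uElt F c) (f0 χ') = f0 χ' := by
  funext x
  have hlo : lo (x * uElt F c) = lo x := by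
    rw [uElt_eq_bElt, lo_mul_bElt]; simp
  have hdet : detv (x * uElt F c) = detv x := by rw [detv_mul, detv_uElt, mul_one]
  show f0 χ' (x * uElt F c) = f0 χ' x
  simp only [f0, hlo, hdet]

lemma fD_rt_uElt (c : F) : rt F k (uElt F c) (fD χ') = fD χ' := by
  funext x
  have hdet : detv (x * uElt F c) = detv x := by rw [detv_mul, detv_uElt, mul_one]
  show fD χ' (x * uElt F c) = fD χ' x
  simp only [fD, hdet]

lemma X_val_mul (a d : Fˣ) : X χ' ((a : F) * (d : F)) = (χ' (a * d) : k) := by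
  rw [← Units.val_mul, X_unit]

lemma f0_rt_hElt (a d : Fˣ) : rt F k (hElt F a d) (f0 χ') = (χ' (a * d) : k) • f0 χ' := by
  funext x
  have hlo : lo (x * hElt F a d) = (a:F) * lo x := lo_mul_bElt x a d 0
  have hdet : detv (x * hElt F a d) = detv x * ((a:F) * (d:F)) := by
    rw [detv_mul, hElt, detv_bElt]
  show f0 χ' (x * hElt F a d) = (χ' (a * d) : k) * f0 χ' x
  simp only [f0, hlo, hdet]
  rcases eq_or_ne (lo x) 0 with h | h
  · rw [if_pos (by rw [h, mul_zero]), if_pos h, X_mul, X_val_mul, mul_comm]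
  · rw [if_neg (by simp [h, a.ne_zero]), if_neg h, mul_zero]

lemma fD_rt_hElt (a d : Fˣ) : rt F k (hElt F a d) (fD χ') = (χ' (a * d) : k) • fD χ' := by
  funext x
  have hdet : detv (x * hElt F a d) = detv x * ((a:F) * (d:F)) := by
    rw [detv_mul, hElt, detv_bElt]
  show fD χ' (x * hElt F a d) = (χ' (a * d) : k) * fD χ' x
  simp only [fD, hdet]
  rw [X_mul, X_val_mul, mul_comm]

lemma detv_inv_one {g : GL2 F} (h : detv g = 1) : detv g⁻¹ = 1 := by
  rw [detv_inv, h, inv_one]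

lemma coe_nsInv_uElt (c : F) :
    (((nsElt F)⁻¹ * uElt F c : GL2 F) : Matrix (Fin 2) (Fin 2) F) = !![0, 1; -1, -c] := by
  rw [coe_mul, coe_ns_inv, coe_uElt, Matrix.mul_fin_two]
  norm_num

lemma coe_uElt_nsInv (c : F) :
    ((uElt F c * (nsElt F)⁻¹ : GL2 F) : Matrix (Fin 2) (Fin 2) F) = !![-c, 1; -1, 0] := by
  rw [coe_mul, coe_uElt, coe_ns_inv, Matrix.mul_fin_two]
  norm_num

lemma detv_nsInv_uElt (c : F) : detv ((nsElt F)⁻¹ * uElt F c : GL2 F) = 1 := by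
  rw [detv_mul, detv_uElt, mul_one, detv_inv_one detv_nsElt]

lemma detv_uElt_nsInv (c : F) : detv (uElt F c * (nsElt F)⁻¹ : GL2 F) = 1 := by
  rw [detv_mul, detv_uElt, one_mul, detv_inv_one detv_nsElt]

lemma lo_nsInv_uElt_mul (c : F) (x : GL2 F) :
    lo ((nsElt F)⁻¹ * uElt F c * x) =
      -((x : Matrix (Fin 2) (Fin 2) F) 0 0 + c * lo x) := by
  rw [lo, coe_mul, mul_ent, coe_nsInv_uElt]
  simp [lo]
  ring

lemma lo_mul_uElt_nsInv (x : GL2 F) (c : F) :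
    lo (x * (uElt F c * (nsElt F)⁻¹)) = -(c * lo x + hi x) := by
  rw [lo, coe_mul, mul_ent, coe_uElt_nsInv]
  simp [lo, hi]
  ring

/-- `T_{n_s} f₀ = f_D - f₀`. -/
lemma heckeT_f0 : heckeT F k (f0 χ') = fD χ' - f0 χ' := by
  funext x
  show ∑ c : F, f0 χ' ((nsElt F)⁻¹ * uElt F c * x) = fD χ' x - f0 χ' x
  have hterm : ∀ c : F, f0 χ' ((nsElt F)⁻¹ * uElt F c * x) =
      if (x : Matrix (Fin 2) (Fin 2) F) 0 0 + c * lo x = 0 then X χ' (detv x) else 0 := by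
    intro c
    rw [f0, lo_nsInv_uElt_mul, neg_eq_zero, detv_mul, detv_nsInv_uElt, one_mul]
  rw [Finset.sum_congr rfl fun c _ => hterm c]
  rcases eq_or_ne (lo x) 0 with h | h
  · have h00 : (x : Matrix (Fin 2) (Fin 2) F) 0 0 ≠ 0 := by
      intro h0
      exact detv_ne_zero x (by rw [detv_eq, h, h0, mul_zero, zero_mul, sub_zero])
    rw [Finset.sum_eq_zero fun c _ => by rw [if_neg (by rw [h, mul_zero, add_zero]; exact h00)]]
    rw [fD, f0, if_pos h, sub_self]
  · have hiff : ∀ c : F, ((x : Matrix (Fin 2) (Fin 2) F) 0 0 + c * lo x = 0) ↔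
        c = -((x : Matrix (Fin 2) (Fin 2) F) 0 0) / lo x := by
      intro c
      constructor
      · intro hh
        field_simp
        linear_combination hh
      · intro hh
        rw [hh, div_mul_cancel₀ _ h, add_neg_cancel]
    calc ∑ c : F, (if (x : Matrix (Fin 2) (Fin 2) F) 0 0 + c * lo x = 0
            then X χ' (detv x) else 0)
        = ∑ c : F, (if c = -((x : Matrix (Fin 2) (Fin 2) F) 0 0) / lo x
            then X χ' (detv x) else 0) :=
          Finset.sum_congr rfl fun c _ => by rw [if_congr (hiff c) rfl rfl]
      _ = X χ' (detv x) := by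
          rw [Finset.sum_ite_eq' Finset.univ _ (fun _ => X χ' (detv x))]
          simp
      _ = fD χ' x - f0 χ' x := by rw [fD, f0, if_neg h, sub_zero]

lemma sum_fD_conj (x : GL2 F) :
    ∑ c : F, fD χ' (x * (uElt F c * (nsElt F)⁻¹)) = (Fintype.card F : k) * fD χ' x := by
  have h : ∀ c : F, fD χ' (x * (uElt F c * (nsElt F)⁻¹)) = fD χ' x := by
    intro c
    rw [fD, fD, detv_mul, detv_uElt_nsInv, mul_one]
  rw [Finset.sum_congr rfl fun c _ => h c, Finset.sum_const, Finset.card_univ, nsmul_eq_mul]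

lemma sum_f0_conj (x : GL2 F) :
    ∑ c : F, f0 χ' (x * (uElt F c * (nsElt F)⁻¹)) = fD χ' x - f0 χ' x := by
  have hterm : ∀ c : F, f0 χ' (x * (uElt F c * (nsElt F)⁻¹)) =
      if c * lo x + hi x = 0 then X χ' (detv x) else 0 := by
    intro c
    rw [f0, lo_mul_uElt_nsInv, neg_eq_zero, detv_mul, detv_uElt_nsInv, mul_one]
  rw [Finset.sum_congr rfl fun c _ => hterm c]
  rcases eq_or_ne (lo x) 0 with h | h
  · have h11 : hi x ≠ 0 := by
      intro h0
      exact detv_ne_zero x (by rw [detv_eq, h, h0]; ring)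
    rw [Finset.sum_eq_zero fun c _ => by rw [if_neg (by rw [h, mul_zero, zero_add]; exact h11)]]
    rw [fD, f0, if_pos h, sub_self]
  · have hiff : ∀ c : F, (c * lo x + hi x = 0) ↔ c = -(hi x) / lo x := by
      intro c
      constructor
      · intro hh
        field_simp
        linear_combination hh
      · intro hh
        rw [hh, div_mul_cancel₀ _ h, neg_add_cancel]
    calc ∑ c : F, (if c * lo x + hi x = 0 then X χ' (detv x) else 0)
        = ∑ c : F, (if c = -(hi x) / lo x then X χ' (detv x) else 0) :=
          Finset.sum_congr rfl fun c _ => by rw [if_congr (hiff c) rfl rfl]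
      _ = X χ' (detv x) := by
          rw [Finset.sum_ite_eq' Finset.univ _ (fun _ => X χ' (detv x))]
          simp
      _ = fD χ' x - f0 χ' x := by rw [fD, f0, if_neg h, sub_zero]

/-- the vector `w = T_{n_s} f₀ = f_D - f₀` satisfies the Hecke-eigenvalue relation. -/
lemma hsum_w (hq : (Fintype.card F : k) = 0) :
    ∑ c : F, rt F k (uElt F c) (rt F k ((nsElt F)⁻¹) (fD χ' - f0 χ')) =
      -(fD χ' - f0 χ') := by
  funext x
  rw [Finset.sum_apply]
  have hterm : ∀ c : F, rt F k (uElt F c) (rt F k ((nsElt F)⁻¹) (fD χ' - f0 χ')) x =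
      fD χ' (x * (uElt F c * (nsElt F)⁻¹)) - f0 χ' (x * (uElt F c * (nsElt F)⁻¹)) := by
    intro c
    rw [rt_apply, rt_apply, mul_assoc]
    rfl
  rw [Finset.sum_congr rfl fun c _ => hterm c, Finset.sum_sub_distrib, sum_fD_conj, sum_f0_conj,
    hq, zero_mul]
  show 0 - (fD χ' x - f0 χ' x) = -(fD χ' - f0 χ') x
  rw [zero_sub]
  rfl

section Fix

/-- translation operator on `F → k`. -/
def tau (l : F) : Module.End k (F → k) where
  toFun t := fun c => t (c + l)
  map_add' _ _ := rfl
  map_smul' _ _ := rfl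

lemma tau_apply (l : F) (t : F → k) (c : F) : (tau l t : F → k) c = t (c + l) := rfl

lemma tau_mul (l m : F) : (tau l * tau m : Module.End k (F → k)) = tau (l + m) := by
  refine LinearMap.ext fun t => funext fun c => ?_
  show t (c + l + m) = t (c + (l + m))
  rw [add_assoc]

lemma tau_zero : (tau (0 : F) : Module.End k (F → k)) = 1 := by
  refine LinearMap.ext fun t => funext fun c => ?_
  show t (c + 0) = t c
  rw [add_zero]

lemma tau_pow (l : F) (m : ℕ) : (tau l : Module.End k (F → k)) ^ m = tau (m • l) := by
  induction m with
  | zero => rw [pow_zero, zero_smul, tau_zero]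
  | succ m ih => rw [pow_succ, ih, tau_mul, succ_nsmul]

lemma charP_end (p : ℕ) [Fact p.Prime] [CharP k p] : CharP (Module.End k (F → k)) p := by
  constructor
  intro x
  have h0 : ((x : ℕ) : Module.End k (F → k)) = algebraMap k _ (x : k) :=
    (map_natCast (algebraMap k _) x).symm
  have h1 : (1 : Module.End k (F → k)) ≠ 0 := by
    intro h
    have h2 := congrFun (congrArg (fun e : Module.End k (F → k) => e (fun _ => (1:k))) h) 0
    simp at h2
  rw [h0, Algebra.algebraMap_eq_smul_one, smul_eq_zero, or_iff_left h1,
    CharP.cast_eq_zero_iff k p x]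

lemma tau_pow_p (p : ℕ) [Fact p.Prime] [CharP F p] (l : F) : (tau l : Module.End k (F → k)) ^ p = 1 := by
  rw [tau_pow, nsmul_eq_mul, CharP.cast_eq_zero F p, zero_mul, tau_zero]

lemma d_pow_p (p : ℕ) [Fact p.Prime] [CharP F p] [CharP k p] (l : F) : ((tau l : Module.End k (F → k)) - 1) ^ p = 0 := by
  haveI := charP_end (F := F) (k := k) p
  rw [sub_pow_char_of_commute _ (Commute.one_right _), tau_pow_p p, one_pow, sub_self]

lemma fix (p : ℕ) [Fact p.Prime] [CharP F p] [CharP k p] (T : Submodule k (F → k)) (hT : ∀ t ∈ T, ∀ l : F, tau l t ∈ T)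
    (t0 : F → k) (ht0 : t0 ∈ T) (hne : t0 ≠ 0) :
    ∃ u : F → k, u ∈ T ∧ u ≠ 0 ∧ ∀ c : F, u c = u 0 := by
  suffices h : ∀ (m : ℕ) (s : Finset F) (t : F → k), (Finset.univ \ s).card ≤ m →
      t ∈ T → t ≠ 0 → (∀ l ∈ s, tau l t = t) →
      ∃ u : F → k, u ∈ T ∧ u ≠ 0 ∧ ∀ l : F, tau l u = u by
    obtain ⟨u, hu, hune, hfix⟩ :=
      h (Finset.univ \ ∅).card ∅ t0 le_rfl ht0 hne (by simp)
    refine ⟨u, hu, hune, fun c => ?_⟩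
    have h2 := congrFun (hfix c) 0
    rwa [tau_apply, zero_add] at h2
  intro m
  induction m with
  | zero =>
    intro s t hcard htT htne hfix
    refine ⟨t, htT, htne, fun l => ?_⟩
    apply hfix
    by_contra hl
    have hmem : l ∈ Finset.univ \ s := by simp [hl]
    have := Finset.card_pos.mpr ⟨l, hmem⟩
    omega
  | succ m ih =>
    intro s t hcard htT htne hfix
    by_cases hall : ∀ l : F, tau l t = t
    · exact ⟨t, htT, htne, hall⟩
    push_neg at hall
    obtain ⟨l, hl⟩ := hall
    have hls : l ∉ s := fun h => hl (hfix l h)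
    set dop : Module.End k (F → k) := tau l - 1 with hd
    have hp0 : (dop ^ p) t = 0 := by rw [d_pow_p p]; rfl
    have hP : ∃ j, (dop ^ j) t = 0 := ⟨p, hp0⟩
    have hj0 : (dop ^ (Nat.find hP)) t = 0 := Nat.find_spec hP
    have hj0pos : Nat.find hP ≠ 0 := by
      intro h
      rw [h, pow_zero, Module.End.one_apply] at hj0
      exact htne hj0
    set j := Nat.find hP - 1 with hj
    have hj1 : (dop ^ j) t ≠ 0 := Nat.find_min hP (by omega)
    have hj2 : (dop ^ (j + 1)) t = 0 := by
      rw [hj, Nat.sub_add_cancel (by omega)]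
      exact hj0
    set u : F → k := (dop ^ j) t with hu
    have hdT : ∀ w ∈ T, dop w ∈ T := by
      intro w hw
      have : dop w = tau l w - w := by rw [hd]; rfl
      rw [this]
      exact T.sub_mem (hT w hw l) hw
    have huT : u ∈ T := by
      rw [hu]
      clear hj1 hj2 hu
      induction j with
      | zero => simpa using htT
      | succ i ihi =>
        rw [pow_succ', Module.End.mul_apply]
        exact hdT _ ihi
    have hufl : tau l u = u := by
      have h0 : dop u = 0 := by
        rw [hu, ← Module.End.mul_apply, ← pow_succ']
        exact hj2
      have h2 : tau l u - u = 0 := by rw [← h0]; rfl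
      rw [sub_eq_zero] at h2
      exact h2
    have hufs : ∀ x ∈ s, tau x u = u := by
      intro x hx
      have hcomm : Commute (tau x : Module.End k (F → k)) dop := by
        rw [hd]
        apply Commute.sub_right
        · show tau x * tau l = tau l * tau x
          rw [tau_mul, tau_mul, add_comm]
        · exact Commute.one_right _
      calc tau x u = (tau x) ((dop ^ j) t) := rfl
        _ = ((tau x * dop ^ j : Module.End k (F → k))) t := (Module.End.mul_apply _ _ _).symm
        _ = ((dop ^ j * tau x : Module.End k (F → k))) t := by rw [(hcomm.pow_right j).eq]
        _ = (dop ^ j) (tau x t) := Module.End.mul_apply _ _ _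
        _ = u := by rw [hfix x hx]
    refine ih (insert l s) u ?_ huT hj1 ?_
    · have hsd : Finset.univ \ insert l s = (Finset.univ \ s).erase l := by
        rw [Finset.sdiff_insert]
      rw [hsd, Finset.card_erase_of_mem (by simp [hls])]
      omega
    · intro x hx
      rcases Finset.mem_insert.mp hx with rfl | hx
      · exact hufl
      · exact hufs x hx

end Fix

/-- coordinate map recording the values on the cosets `B n_s u_c`. -/
def cmap : (GL2 F → k) →ₗ[k] (F → k) where
  toFun f := fun c => f (cRep c)
  map_add' _ _ := rfl
  map_smul' _ _ := rfl

lemma theta_ker (p : ℕ) [Fact p.Prime] [CharP F p] [CharP k p]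
    (hU : ∀ c : F, ρ (uElt F c) v = v)
    (hH : ∀ a d : Fˣ, ρ (hElt F a d) v = (χ' (a * d) : k) • v)
    (hvne : v ≠ 0)
    (hsum : ∑ c : F, ρ (uElt F c) (ρ ((nsElt F)⁻¹) v) = -v)
    {f : GL2 F → k} (hf : f ∈ Ind F k (χ'.comp mulMonoidHom))
    (hker : theta ρ v f = 0) : f ∈ Submodule.span k {fD χ'} := by
  rw [Submodule.mem_span_singleton]
  refine ⟨f 1, ?_⟩
  by_contra hne0
  set g : GL2 F → k := f - f 1 • fD χ' with hg
  have hgInd : g ∈ Ind F k (χ'.comp mulMonoidHom) :=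
    Submodule.sub_mem _ hf (Submodule.smul_mem _ _ (fD_mem χ'))
  have hgker : theta ρ v g = 0 := by
    rw [hg, map_sub, LinearMap.map_smul, hker, theta_fD χ' hsum, smul_zero, sub_zero]
  have hg1 : g 1 = 0 := by
    show f 1 - f 1 * fD χ' 1 = 0
    rw [fD_one, mul_one, sub_self]
  have hgne : g ≠ 0 := by
    intro h0
    exact hne0 ((sub_eq_zero.mp h0).symm)
  -- the submodule of coordinate vectors
  set N0 : Submodule k (GL2 F → k) :=
    (Ind F k (χ'.comp mulMonoidHom) ⊓ LinearMap.ker (theta ρ v)) ⊓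
      LinearMap.ker (LinearMap.proj (R := k) (φ := fun _ : GL2 F => k) 1) with hN0
  have hmemN0 : ∀ h : GL2 F → k, h ∈ N0 ↔
      (h ∈ Ind F k (χ'.comp mulMonoidHom) ∧ theta ρ v h = 0) ∧ h 1 = 0 := by
    intro h
    simp [hN0, Submodule.mem_inf, LinearMap.mem_ker]
  set T : Submodule k (F → k) := Submodule.map (cmap (F := F) (k := k)) N0 with hTdef
  have hT : ∀ t ∈ T, ∀ l : F, tau l t ∈ T := by
    rintro t ⟨h, hh, rfl⟩ l
    replace hh : h ∈ N0 := hh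
    rw [hmemN0] at hh
    refine ⟨rt F k (uElt F l) h, ?_, ?_⟩
    · show rt F k (uElt F l) h ∈ N0
      rw [hmemN0]
      refine ⟨⟨rt_mem hh.1.1 _, ?_⟩, ?_⟩
      · rw [theta_comm χ' hU hH hh.1.1, hh.1.2, map_zero]
      · show h (1 * uElt F l) = 0
        rw [one_mul, uElt_eq_bElt]
        have h2 := hh.1.1 1 1 l 1
        rw [mul_one, chi_apply, mul_one, _root_.map_one, Units.val_one, one_mul] at h2
        rw [h2, hh.2]
    · funext c
      show h (cRep c * uElt F l) = cmap h (c + l)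
      rw [cRep_mul_uElt]
      rfl
  have htg : cmap g ∈ T := ⟨g, (hmemN0 g).mpr ⟨⟨hgInd, hgker⟩, hg1⟩, rfl⟩
  have htgne : cmap g ≠ 0 := by
    intro h0
    apply hgne
    refine Ind_ext χ' hgInd (Submodule.zero_mem _) ?_ ?_
    · rw [hg1]; rfl
    · intro c
      exact congrFun h0 c
  obtain ⟨u, huT, hune, hucst⟩ := fix p T hT (cmap g) htg htgne
  have hu0 : u 0 ≠ 0 := by
    intro h0
    exact hune (funext fun c => by rw [hucst c, h0]; rfl)
  obtain ⟨h, hhN0, hch⟩ := huT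
  replace hhN0 : h ∈ N0 := hhN0
  rw [hmemN0] at hhN0
  set h' : GL2 F → k := (u 0)⁻¹ • h with hh'
  have hw : h' = fD χ' - f0 χ' := by
    refine Ind_ext χ' (Submodule.smul_mem _ _ hhN0.1.1)
      (Submodule.sub_mem _ (fD_mem χ') (f0_mem χ')) ?_ ?_
    · show (u 0)⁻¹ * h 1 = fD χ' 1 - f0 χ' 1
      rw [hhN0.2, mul_zero, fD_one, f0_one, sub_self]
    · intro c
      show (u 0)⁻¹ * h (cRep c) = fD χ' (cRep c) - f0 χ' (cRep c)
      have : h (cRep c) = u c := congrFun hch c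
      rw [this, hucst c, inv_mul_cancel₀ hu0, fD_cRep, f0_cRep, sub_zero]
  have hth' : theta ρ v h' = 0 := by
    rw [hh', LinearMap.map_smul, hhN0.1.2, smul_zero]
  rw [hw, map_sub, theta_fD χ' hsum, theta_f0, zero_sub, neg_eq_zero] at hth'
  exact hvne hth'

lemma ker_theta_comp (p : ℕ) [Fact p.Prime] [CharP F p] [CharP k p]
    (hU : ∀ c : F, ρ (uElt F c) v = v)
    (hH : ∀ a d : Fˣ, ρ (hElt F a d) v = (χ' (a * d) : k) • v)
    (hvne : v ≠ 0)
    (hsum : ∑ c : F, ρ (uElt F c) (ρ ((nsElt F)⁻¹) v) = -v) :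
    LinearMap.ker ((theta ρ v) ∘ₗ (Ind F k (χ'.comp mulMonoidHom)).subtype) =
      Submodule.comap (Ind F k (χ'.comp mulMonoidHom)).subtype
        (Submodule.span k {fD χ'}) := by
  ext f
  rw [LinearMap.mem_ker, LinearMap.comp_apply, Submodule.mem_comap]
  constructor
  · intro h
    exact theta_ker χ' p hU hH hvne hsum f.2 h
  · intro h
    have h2 : (f : GL2 F → k) ∈ Submodule.span k {fD χ'} := h
    rw [Submodule.mem_span_singleton] at h2
    obtain ⟨a, ha⟩ := h2
    show theta ρ v (f : GL2 F → k) = 0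
    rw [← ha, LinearMap.map_smul, theta_fD χ' hsum, smul_zero]

/-- the linear equivalence `Ind χ ≃ k^{q+1}` by evaluation on coset representatives. -/
def indEquiv : (Ind F k (χ'.comp mulMonoidHom)) ≃ₗ[k] (Option F → k) where
  toFun f o := (f : GL2 F → k) (iota o)
  map_add' _ _ := rfl
  map_smul' _ _ := rfl
  invFun t := ⟨fun g => X χ' (detv g) * t (idx g), by
    intro a d c g
    show X χ' (detv (bElt F a d c * g)) * t (idx (bElt F a d c * g)) = _
    rw [chi_apply, idx_bElt_mul, X_detv_bElt_mul, mul_assoc]⟩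
  left_inv f := Subtype.ext (funext fun g => by
    show X χ' (detv g) * (f : GL2 F → k) (iota (idx g)) = (f : GL2 F → k) g
    exact (eval_Ind χ' f.2 g).symm)
  right_inv t := funext fun o => by
    show X χ' (detv (iota o)) * t (idx (iota o)) = t o
    rw [detv_iota, X_one, one_mul, idx_iota]

lemma finrank_Ind :
    Module.finrank k (Ind F k (χ'.comp mulMonoidHom)) = Fintype.card F + 1 := by
  rw [LinearEquiv.finrank_eq (indEquiv χ'), Module.finrank_pi, Fintype.card_option]

lemma fD_ne_zero : fD χ' ≠ 0 := by
  intro h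
  have h2 := congrFun h 1
  rw [fD_one] at h2
  exact one_ne_zero h2

lemma lo_nsElt : lo (nsElt F) = 1 := by rw [lo, coe_nsElt]; simp

lemma w_ne_zero : fD χ' - f0 χ' ≠ 0 := by
  intro h
  have h2 : fD χ' (nsElt F) - f0 χ' (nsElt F) = 0 := congrFun h (nsElt F)
  rw [fD, detv_nsElt, X_one, f0, if_neg (by rw [lo_nsElt]; exact one_ne_zero), sub_zero] at h2
  exact one_ne_zero h2

lemma heckeT_rt_comm (g : GL2 F) (f : GL2 F → k) :
    heckeT F k (rt F k g f) = rt F k g (heckeT F k f) := by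
  funext x
  show ∑ c : F, rt F k g f ((nsElt F)⁻¹ * uElt F c * x) = ∑ c : F, f ((nsElt F)⁻¹ * uElt F c * (x * g))
  refine Finset.sum_congr rfl fun c _ => ?_
  rw [rt_apply, mul_assoc]

lemma map_heckeT_eq_span :
    Submodule.map (heckeT F k) (Ind F k (χ'.comp mulMonoidHom)) =
      Submodule.span k (Set.range fun g : GL2 F => rt F k g (fD χ' - f0 χ')) := by
  apply le_antisymm
  · rintro y ⟨f, hf, rfl⟩
    have h1 : heckeT F k f =
        ∑ o : Option F, f (iota o) • rt F k (iota o)⁻¹ (fD χ' - f0 χ') := by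
      conv_lhs => rw [← theta_id χ' hf]
      show heckeT F k (∑ o : Option F, f (iota o) • rt F k (iota o)⁻¹ (f0 χ')) = _
      rw [map_sum]
      refine Finset.sum_congr rfl fun o _ => ?_
      rw [LinearMap.map_smul, heckeT_rt_comm, heckeT_f0]
    rw [h1]
    apply Submodule.sum_mem
    intro o _
    exact Submodule.smul_mem _ _ (Submodule.subset_span ⟨(iota o)⁻¹, rfl⟩)
  · rw [Submodule.span_le]
    rintro y ⟨g, rfl⟩
    exact ⟨rt F k g (f0 χ'), rt_mem (f0_mem χ') g, by rw [heckeT_rt_comm, heckeT_f0]⟩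

end Stmt3

open Stmt3 in
/-- let `χ = χ' ∘ det` on `H` (so `χ^s = χ`). If `v ≠ 0` is fixed by `U`,
`H` acts on `v` by `χ`, and `∑_{λ} u_λ • (n_s⁻¹ • v) = -v`, then the `k[Γ]`-submodule
generated by `v` is isomorphic to `Im (T_{n_s} : Ind_B^Γ χ → Ind_B^Γ χ)`; in particular
it has dimension `q` over `k`. -/
theorem stmt_3 (p n : ℕ) [Fact p.Prime] (hn : 1 ≤ n) (hF : Fintype.card F = p ^ n)
    [IsAlgClosed k] [CharP k p]
    (χ' : Fˣ →* kˣ)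
    (M : Type) [AddCommGroup M] [Module k M]
    (ρ : Representation k (GL2 F) M) (v : M) (hv : v ≠ 0)
    (hU : ∀ c : F, ρ (uElt F c) v = v)
    (hH : ∀ a d : Fˣ, ρ (hElt F a d) v = (χ' (a * d) : k) • v)
    (hsum : ∑ c : F, ρ (uElt F c) (ρ ((nsElt F)⁻¹) v) = -v) :
    (∃ e : M →ₗ[k] (GL2 F → k),
      (∀ (g : GL2 F), ∀ x ∈ Submodule.span k (Set.range fun g : GL2 F => ρ g v),
        e (ρ g x) = rt F k g (e x)) ∧
      (∀ x ∈ Submodule.span k (Set.range fun g : GL2 F => ρ g v), e x = 0 → x = 0) ∧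
      Submodule.map e (Submodule.span k (Set.range fun g : GL2 F => ρ g v)) =
        Submodule.map (heckeT F k) (Ind F k (χ'.comp mulMonoidHom))) ∧
    Module.finrank k ↥(Submodule.span k (Set.range fun g : GL2 F => ρ g v)) =
      Fintype.card F := by
  classical
  -- `F` has characteristic `p`
  haveI hFp : CharP F p := by
    haveI : CharP F (ringChar F) := ringChar.charP F
    have hrp : (ringChar F).Prime := CharP.char_is_prime F (ringChar F)
    obtain ⟨m, -, hcard⟩ := FiniteField.card F (ringChar F)
    have hdvd : p ∣ (ringChar F) ^ (m : ℕ) := by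
      rw [← hcard, hF]
      exact dvd_pow_self p (by omega)
    have h2 := Nat.Prime.dvd_of_dvd_pow (Fact.out) hdvd
    have hpr : p = ringChar F := (Nat.prime_dvd_prime_iff_eq Fact.out hrp).mp h2
    rw [hpr]
    exact ringChar.charP F
  have hq : ((Fintype.card F : ℕ) : k) = 0 := by
    rw [hF, Nat.cast_pow, CharP.cast_eq_zero k p, zero_pow (by omega)]
  -- the model vector `w = T f₀ = f_D - f₀`
  have hUw : ∀ c : F, rt F k (uElt F c) (fD χ' - f0 χ') = fD χ' - f0 χ' := fun c => by
    rw [map_sub, fD_rt_uElt, f0_rt_uElt]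
  have hHw : ∀ a d : Fˣ, rt F k (hElt F a d) (fD χ' - f0 χ') =
      (χ' (a * d) : k) • (fD χ' - f0 χ') := fun a d => by
    rw [map_sub, fD_rt_hElt, f0_rt_hElt, smul_sub]
  have hvw : fD χ' - f0 χ' ≠ 0 := w_ne_zero χ'
  have hsumw : ∑ c : F, rt F k (uElt F c) (rt F k ((nsElt F)⁻¹) (fD χ' - f0 χ')) =
      -(fD χ' - f0 χ') := hsum_w χ' hq
  set P := Submodule.span k (Set.range fun g : GL2 F => ρ g v) with hP
  set A := (theta ρ v) ∘ₗ (Ind F k (χ'.comp mulMonoidHom)).subtype with hA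
  set B := (theta (rt F k) (fD χ' - f0 χ')) ∘ₗ (Ind F k (χ'.comp mulMonoidHom)).subtype with hB
  have hrangeA : LinearMap.range A = P := by
    rw [hA, LinearMap.range_comp, Submodule.range_subtype, theta_map χ' hU hH, hP]
  have hrangeB : LinearMap.range B = Submodule.map (heckeT F k)
      (Ind F k (χ'.comp mulMonoidHom)) := by
    rw [hB, LinearMap.range_comp, Submodule.range_subtype, theta_map χ' hUw hHw,
      ← map_heckeT_eq_span χ']
  haveI hfd : FiniteDimensional k (Ind F k (χ'.comp mulMonoidHom)) :=
    (indEquiv χ').symm.finiteDimensional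
  have hkerA : LinearMap.ker A = Submodule.comap
      (Ind F k (χ'.comp mulMonoidHom)).subtype (Submodule.span k {fD χ'}) :=
    ker_theta_comp χ' p hU hH hv hsum
  have hkerB : LinearMap.ker B = Submodule.comap
      (Ind F k (χ'.comp mulMonoidHom)).subtype (Submodule.span k {fD χ'}) :=
    ker_theta_comp χ' p hUw hHw hvw hsumw
  have hkerAB : LinearMap.ker A = LinearMap.ker B := by rw [hkerA, hkerB]
  -- dimension count
  have hle : Submodule.span k {fD χ'} ≤ Ind F k (χ'.comp mulMonoidHom) := by
    rw [Submodule.span_le, Set.singleton_subset_iff]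
    exact fD_mem χ'
  have hkerrank : Module.finrank k (LinearMap.ker A) = 1 := by
    rw [hkerA, LinearEquiv.finrank_eq (Submodule.comapSubtypeEquivOfLe hle)]
    exact finrank_span_singleton (fD_ne_zero χ')
  have hrank : Module.finrank k P = Fintype.card F := by
    have h1 := LinearMap.finrank_range_add_finrank_ker A
    rw [hrangeA, hkerrank, finrank_Ind χ'] at h1
    omega
  -- the linear map `e`
  obtain ⟨C, hC⟩ := Submodule.exists_isCompl P
  set pr := P.linearProjOfIsCompl C hC with hpr
  set eiso : P →ₗ[k] (GL2 F → k) :=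
    (LinearMap.range B).subtype ∘ₗ (LinearMap.quotKerEquivRange B).toLinearMap ∘ₗ
      (Submodule.quotEquivOfEq _ _ hkerAB).toLinearMap ∘ₗ
      (LinearMap.quotKerEquivRange A).symm.toLinearMap ∘ₗ
      (LinearEquiv.ofEq P (LinearMap.range A) hrangeA.symm).toLinearMap with heiso
  set e := eiso ∘ₗ pr with he
  have hKEY : ∀ f : GL2 F → k, f ∈ Ind F k (χ'.comp mulMonoidHom) →
      e (theta ρ v f) = theta (rt F k) (fD χ' - f0 χ') f := by
    intro f hf
    have hmem : theta ρ v f ∈ P := by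
      rw [← hrangeA]
      exact ⟨⟨f, hf⟩, rfl⟩
    have hmemA : theta ρ v f ∈ LinearMap.range A := ⟨⟨f, hf⟩, rfl⟩
    have h1 : pr (theta ρ v f) = ⟨theta ρ v f, hmem⟩ :=
      Submodule.linearProjOfIsCompl_apply_left hC ⟨theta ρ v f, hmem⟩
    have h2 : (LinearEquiv.ofEq P (LinearMap.range A) hrangeA.symm)
        ⟨theta ρ v f, hmem⟩ = ⟨theta ρ v f, hmemA⟩ := rfl
    have h3 : (LinearMap.quotKerEquivRange A).symm ⟨theta ρ v f, hmemA⟩ =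
        Submodule.Quotient.mk ⟨f, hf⟩ := by
      rw [LinearEquiv.symm_apply_eq]
      exact Subtype.ext (LinearMap.quotKerEquivRange_apply_mk A ⟨f, hf⟩).symm
    calc e (theta ρ v f)
        = (LinearMap.range B).subtype ((LinearMap.quotKerEquivRange B)
            ((Submodule.quotEquivOfEq _ _ hkerAB)
              ((LinearMap.quotKerEquivRange A).symm
                ((LinearEquiv.ofEq P (LinearMap.range A) hrangeA.symm)
                  (pr (theta ρ v f)))))) := rfl
      _ = theta (rt F k) (fD χ' - f0 χ') f := by
          rw [h1, h2, h3, Submodule.quotEquivOfEq_mk]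
          exact LinearMap.quotKerEquivRange_apply_mk B ⟨f, hf⟩
  refine ⟨⟨e, ?_, ?_, ?_⟩, hrank⟩
  · intro g x hx
    rw [hP] at hx
    rw [← theta_map χ' hU hH] at hx
    obtain ⟨f, hf, rfl⟩ := hx
    have h1 : ρ g (theta ρ v f) = theta ρ v (rt F k g f) := (theta_comm χ' hU hH hf g).symm
    rw [h1, hKEY _ (rt_mem hf g), hKEY _ hf, theta_comm χ' hUw hHw hf g]
  · intro x hx hex
    rw [hP] at hx
    rw [← theta_map χ' hU hH] at hx
    obtain ⟨f, hf, rfl⟩ := hx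
    rw [hKEY _ hf] at hex
    have h2 : f ∈ Submodule.span k {fD χ'} :=
      theta_ker χ' p hUw hHw hvw hsumw hf hex
    rw [Submodule.mem_span_singleton] at h2
    obtain ⟨a, ha⟩ := h2
    rw [← ha, LinearMap.map_smul, theta_fD χ' hsum, smul_zero]
  · apply le_antisymm
    · rintro y ⟨x, hx, rfl⟩
      replace hx : x ∈ P := hx
      rw [hP] at hx
      rw [← theta_map χ' hU hH] at hx
      obtain ⟨f, hf, rfl⟩ := hx
      rw [hKEY _ hf, map_heckeT_eq_span χ', ← theta_map χ' hUw hHw]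
      exact ⟨f, hf, rfl⟩
    · intro y hy
      rw [map_heckeT_eq_span χ', ← theta_map χ' hUw hHw] at hy
      obtain ⟨f, hf, rfl⟩ := hy
      refine ⟨theta ρ v f, ?_, hKEY _ hf⟩
      show theta ρ v f ∈ P
      rw [hP, ← theta_map χ' hU hH]
      exact ⟨f, hf, rfl⟩


end
end

section
/- Let V be a k-vector space with a smooth k-linear action of G = GL₂(ℚ_p), and let v ∈ V be a vector such that: (1) g·v = v for every g in the Iwahori subgroup I; (2) Σ_{λ=0}^{p−1} u_λ·(n_s⁻¹·v) = 0; and (3) Π⁻¹·v = v. Then g·v = v for every g ∈ G. -/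
open Matrix

noncomputable section

/-- The upper-triangular matrix `[[a, c], [0, d]]` in `GL₂(𝔽_p)`. -/
def bEltZMod (p : ℕ) [Fact p.Prime] (a d : (ZMod p)ˣ) (c : ZMod p) : GL (Fin 2) (ZMod p) :=
  Matrix.GeneralLinearGroup.mkOfDetNeZero !![(a : ZMod p), c; 0, (d : ZMod p)]
    (by simp [Matrix.det_fin_two_of])

/-- The subgroup of upper-triangular matrices in `GL₂(𝔽_p)`. -/
def BZMod (p : ℕ) [Fact p.Prime] : Subgroup (GL (Fin 2) (ZMod p)) :=
  Subgroup.closure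
    (Set.range fun x : (ZMod p)ˣ × (ZMod p)ˣ × ZMod p => bEltZMod p x.1 x.2.1 x.2.2)

/-- Reduction modulo `p`, `GL₂(ℤ_p) → GL₂(𝔽_p)`. -/
def redMod (p : ℕ) [Fact p.Prime] : GL (Fin 2) ℤ_[p] →* GL (Fin 2) (ZMod p) :=
  Matrix.GeneralLinearGroup.map (PadicInt.toZMod)

/-- The Iwahori subgroup `I ≤ GL₂(ℚ_p)`: the elements of `K = GL₂(ℤ_p)` whose reduction
modulo `p` is upper-triangular. -/
def Iw (p : ℕ) [Fact p.Prime] : Subgroup (GL (Fin 2) ℚ_[p]) :=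
  Subgroup.map (Matrix.GeneralLinearGroup.map (PadicInt.Coe.ringHom))
    (Subgroup.comap (redMod p) (BZMod p))

/-- The congruence subgroup `K_m`, viewed as a subgroup of `G = GL₂(ℚ_p)`. -/
def Km (p : ℕ) [Fact p.Prime] (m : ℕ) : Subgroup (GL (Fin 2) ℚ_[p]) :=
  Subgroup.map (Matrix.GeneralLinearGroup.map (PadicInt.Coe.ringHom))
    (MonoidHom.ker (Matrix.GeneralLinearGroup.map (PadicInt.toZModPow m)))

/-- The unipotent upper-triangular matrix `u_c = [[1, c], [0, 1]] ∈ GL₂(ℚ_p)`. -/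
def uEltQ (p : ℕ) [Fact p.Prime] (c : ℚ_[p]) : GL (Fin 2) ℚ_[p] :=
  Matrix.GeneralLinearGroup.mkOfDetNeZero !![1, c; 0, 1] (by simp [Matrix.det_fin_two_of])

/-- The matrix `n_s = [[0, -1], [1, 0]] ∈ GL₂(ℚ_p)`. -/
def nsEltQ (p : ℕ) [Fact p.Prime] : GL (Fin 2) ℚ_[p] :=
  Matrix.GeneralLinearGroup.mkOfDetNeZero !![0, -1; 1, 0]
    (by norm_num [Matrix.det_fin_two_of])

/-- The matrix `Π = [[0, 1], [p, 0]] ∈ GL₂(ℚ_p)`. -/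
def PiElt (p : ℕ) [Fact p.Prime] : GL (Fin 2) ℚ_[p] :=
  Matrix.GeneralLinearGroup.mkOfDetNeZero !![0, 1; (p : ℚ_[p]), 0]
    (by
      simp only [Matrix.det_fin_two_of, zero_mul, one_mul, zero_sub, neg_ne_zero]
      exact_mod_cast (Fact.out : p.Prime).ne_zero)


section Aux
variable (p : ℕ) [Fact p.Prime]

@[simp] lemma coe_mkDet {A : Matrix (Fin 2) (Fin 2) ℚ_[p]} {h : A.det ≠ 0} :
    ((Matrix.GeneralLinearGroup.mkOfDetNeZero A h : GL (Fin 2) ℚ_[p]) : Matrix (Fin 2) (Fin 2) ℚ_[p]) = A := rfl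

@[simp] lemma coe_mk'' {R : Type*} [CommRing R] {A : Matrix (Fin 2) (Fin 2) R} {h : IsUnit A.det} :
    ((Matrix.GeneralLinearGroup.mk'' A h : GL (Fin 2) R) : Matrix (Fin 2) (Fin 2) R) = A := rfl

def lEltQ (c : ℚ_[p]) : GL (Fin 2) ℚ_[p] :=
  Matrix.GeneralLinearGroup.mkOfDetNeZero !![1, 0; c, 1] (by simp [Matrix.det_fin_two_of])

@[simp] lemma coe_uEltQ (x : ℚ_[p]) :
    ((uEltQ p x : GL (Fin 2) ℚ_[p]) : Matrix (Fin 2) (Fin 2) ℚ_[p]) = !![1, x; 0, 1] := rfl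
@[simp] lemma coe_lEltQ (x : ℚ_[p]) :
    ((lEltQ p x : GL (Fin 2) ℚ_[p]) : Matrix (Fin 2) (Fin 2) ℚ_[p]) = !![1, 0; x, 1] := rfl
@[simp] lemma coe_nsEltQ :
    ((nsEltQ p : GL (Fin 2) ℚ_[p]) : Matrix (Fin 2) (Fin 2) ℚ_[p]) = !![0, -1; 1, 0] := rfl
@[simp] lemma coe_PiElt :
    ((PiElt p : GL (Fin 2) ℚ_[p]) : Matrix (Fin 2) (Fin 2) ℚ_[p]) = !![0, 1; (p:ℚ_[p]), 0] := rfl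

lemma uEltQ_mul (x y : ℚ_[p]) : uEltQ p x * uEltQ p y = uEltQ p (x + y) := by
  refine Units.ext (Matrix.ext fun i j => ?_)
  fin_cases i <;> fin_cases j <;>
    simp [Matrix.mul_apply, Fin.sum_univ_two] <;> ring

lemma lEltQ_mul (x y : ℚ_[p]) : lEltQ p x * lEltQ p y = lEltQ p (x + y) := by
  refine Units.ext (Matrix.ext fun i j => ?_)
  fin_cases i <;> fin_cases j <;>
    simp [Matrix.mul_apply, Fin.sum_univ_two] <;> ring

@[simp] lemma uEltQ_zero : uEltQ p 0 = 1 := by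
  refine Units.ext (Matrix.ext fun i j => ?_)
  fin_cases i <;> fin_cases j <;> simp [Matrix.one_fin_two]

@[simp] lemma lEltQ_zero : lEltQ p 0 = 1 := by
  refine Units.ext (Matrix.ext fun i j => ?_)
  fin_cases i <;> fin_cases j <;> simp [Matrix.one_fin_two]

lemma lEltQ_mul_ns (x : ℚ_[p]) : lEltQ p x * nsEltQ p = nsEltQ p * uEltQ p (-x) := by
  refine Units.ext (Matrix.ext fun i j => ?_)
  fin_cases i <;> fin_cases j <;>
    simp [Matrix.mul_apply, Fin.sum_univ_two] <;> ring

lemma uEltQ_mul_ns (x : ℚ_[p]) : uEltQ p x * nsEltQ p = nsEltQ p * lEltQ p (-x) := by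
  refine Units.ext (Matrix.ext fun i j => ?_)
  fin_cases i <;> fin_cases j <;>
    simp [Matrix.mul_apply, Fin.sum_univ_two] <;> ring

end Aux

section Iwmem
variable (p : ℕ) [Fact p.Prime]

@[simp] lemma coe_mkDetF {K : Type*} [Field K] {A : Matrix (Fin 2) (Fin 2) K} {h : A.det ≠ 0} :
    ((Matrix.GeneralLinearGroup.mkOfDetNeZero A h : GL (Fin 2) K) : Matrix (Fin 2) (Fin 2) K) = A := rfl

lemma isUnit_iff_toZMod (z : ℤ_[p]) : IsUnit z ↔ PadicInt.toZMod z ≠ 0 := by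
  rw [Ne, ← RingHom.mem_ker, PadicInt.ker_toZMod]
  rw [IsLocalRing.mem_maximalIdeal, mem_nonunits_iff, not_not]

lemma mem_Iw_of_val {g : GL (Fin 2) ℚ_[p]} (A B C D : ℤ_[p])
    (hA : IsUnit A) (hD : IsUnit D)
    (hg : (g : Matrix (Fin 2) (Fin 2) ℚ_[p]) =
      !![(A : ℚ_[p]), (B : ℚ_[p]); (((p : ℤ_[p]) * C : ℤ_[p]) : ℚ_[p]), (D : ℚ_[p])]) :
    g ∈ Iw p := by
  have hp0 : PadicInt.toZMod ((p : ℤ_[p])) = 0 := by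
    rw [map_natCast, ZMod.natCast_self]
  have hdet : IsUnit (!![A, B; (p : ℤ_[p]) * C, D] : Matrix (Fin 2) (Fin 2) ℤ_[p]).det := by
    rw [isUnit_iff_toZMod, Matrix.det_fin_two_of]
    intro h2
    apply (isUnit_iff_toZMod p A).mp hA
    simp only [map_sub, _root_.map_mul, hp0, zero_mul, mul_zero, sub_zero, map_zero] at h2
    rcases mul_eq_zero.mp h2 with h1 | h1
    · exact h1
    · exact absurd h1 ((isUnit_iff_toZMod p D).mp hD)
  have hdet' : IsUnit (Matrix.det (!![A, B; (p : ℤ_[p]) * C, D])) := hdet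
  set M : GL (Fin 2) ℤ_[p] := Matrix.GeneralLinearGroup.mk'' _ hdet' with hM
  have hMval : (M : Matrix (Fin 2) (Fin 2) ℤ_[p]) = !![A, B; (p : ℤ_[p]) * C, D] := rfl
  refine Subgroup.mem_map.mpr ⟨M, ?_, ?_⟩
  · show redMod p M ∈ BZMod p
    have hAu : IsUnit (PadicInt.toZMod A) := hA.map PadicInt.toZMod
    have hDu : IsUnit (PadicInt.toZMod D) := hD.map PadicInt.toZMod
    have h1 : redMod p M = bEltZMod p hAu.unit hDu.unit (PadicInt.toZMod B) := by
      refine Units.ext (Matrix.ext fun i j => ?_)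
      have : (redMod p M : Matrix (Fin 2) (Fin 2) (ZMod p)) i j
          = PadicInt.toZMod ((M : Matrix (Fin 2) (Fin 2) ℤ_[p]) i j) := rfl
      rw [this, hMval]
      fin_cases i <;> fin_cases j <;>
        simp [bEltZMod, hp0, IsUnit.unit_spec]
    rw [h1]
    exact Subgroup.subset_closure ⟨(hAu.unit, hDu.unit, PadicInt.toZMod B), rfl⟩
  · refine Units.ext (Matrix.ext fun i j => ?_)
    have : ((Matrix.GeneralLinearGroup.map (PadicInt.Coe.ringHom) M :
        GL (Fin 2) ℚ_[p]) : Matrix (Fin 2) (Fin 2) ℚ_[p]) i j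
        = ((M : Matrix (Fin 2) (Fin 2) ℤ_[p]) i j : ℚ_[p]) := rfl
    rw [this, hMval, hg]
    fin_cases i <;> fin_cases j <;> simp

lemma mem_Iw_upper {g : GL (Fin 2) ℚ_[p]} (A B D : ℤ_[p])
    (hA : IsUnit A) (hD : IsUnit D)
    (hg : (g : Matrix (Fin 2) (Fin 2) ℚ_[p]) = !![(A : ℚ_[p]), (B : ℚ_[p]); 0, (D : ℚ_[p])]) :
    g ∈ Iw p := by
  refine mem_Iw_of_val p A B 0 D hA hD ?_
  rw [hg]
  norm_num

end Iwmem

lemma u_mul_ns_eq (p : ℕ) [Fact p.Prime] (c e : ℚ_[p]) (hec : e * c = 1)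
    (hdet : (!![c, -1; 0, e]).det ≠ 0) :
    uEltQ p c * nsEltQ p
      = lEltQ p e * Matrix.GeneralLinearGroup.mkOfDetNeZero !![c, -1; 0, e] hdet := by
  refine Units.ext (Matrix.ext fun i j => ?_)
  fin_cases i <;> fin_cases j <;>
    simp [Matrix.mul_apply, Fin.sum_univ_two, hec]


section Fix
/-- The subgroup of elements fixing a given vector of a representation. -/
def fixSubgroup {k : Type*} [CommSemiring k] {G : Type*} [Group G] {V : Type*}
    [AddCommMonoid V] [Module k V] (ρ : Representation k G V) (v : V) : Subgroup G where
  carrier := {g | ρ g v = v}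
  one_mem' := by simp
  mul_mem' := by
    intro a b ha hb
    simp only [Set.mem_setOf_eq] at *
    rw [_root_.map_mul, Module.End.mul_apply, hb, ha]
  inv_mem' := by
    intro a ha
    simp only [Set.mem_setOf_eq] at *
    conv_lhs => rw [← ha]
    rw [← Module.End.mul_apply, ← _root_.map_mul, inv_mul_cancel, _root_.map_one, Module.End.one_apply]

lemma mem_fixSubgroup {k : Type*} [CommSemiring k] {G : Type*} [Group G] {V : Type*}
    [AddCommMonoid V] [Module k V] (ρ : Representation k G V) (v : V) (g : G) :
    g ∈ fixSubgroup ρ v ↔ ρ g v = v := Iff.rfl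
end Fix

set_option maxHeartbeats 2000000 in
/-- if `v` is a vector of a smooth representation of `G = GL₂(ℚ_p)` over `𝔽̄_p`
which is fixed by the Iwahori subgroup `I`, is killed by `∑_{λ=0}^{p-1} u_λ (n_s⁻¹ ⬝)`, and
is fixed by `Π⁻¹`, then `v` is fixed by all of `G`. -/
theorem stmt_4 (p : ℕ) [Fact p.Prime]
    (V : Type) [AddCommGroup V] [Module (AlgebraicClosure (ZMod p)) V]
    (ρ : Representation (AlgebraicClosure (ZMod p)) (GL (Fin 2) ℚ_[p]) V)
    (hsmooth : ∀ w : V, ∃ m : ℕ, 1 ≤ m ∧ ∀ g ∈ Km p m, ρ g w = w)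
    (v : V)
    (hI : ∀ g ∈ Iw p, ρ g v = v)
    (hsum : ∑ j ∈ Finset.range p, ρ (uEltQ p (j : ℚ_[p])) (ρ ((nsEltQ p)⁻¹) v) = 0)
    (hPi : ρ ((PiElt p)⁻¹) v = v) :
    ∀ g : GL (Fin 2) ℚ_[p], ρ g v = v := by
  classical
  have hp : p.Prime := Fact.out
  haveI : NeZero p := ⟨hp.ne_zero⟩
  have hpQ : (p : ℚ_[p]) ≠ 0 := by exact_mod_cast hp.ne_zero
  set S : Subgroup (GL (Fin 2) ℚ_[p]) := fixSubgroup ρ v with hSdef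
  have hmul : ∀ (g h : GL (Fin 2) ℚ_[p]) (x : V), ρ (g * h) x = ρ g (ρ h x) := by
    intro g h x; rw [_root_.map_mul, Module.End.mul_apply]
  have hIwS : ∀ {g : GL (Fin 2) ℚ_[p]}, g ∈ Iw p → ρ g v = v := fun {g} hg => hI g hg
  -- basic Iwahori invariances
  have hUZ : ∀ z : ℤ_[p], ρ (uEltQ p (z : ℚ_[p])) v = v := by
    intro z
    refine hIwS (mem_Iw_upper p 1 z 1 isUnit_one isUnit_one ?_)
    push_cast
    simp
  have hLpZ : ∀ z : ℤ_[p], ρ (lEltQ p (((p * z : ℤ_[p])) : ℚ_[p])) v = v := by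
    intro z
    refine hIwS (mem_Iw_of_val p 1 0 z 1 isUnit_one isUnit_one ?_)
    push_cast
    simp
  -- w = n_s · v
  set w : V := ρ (nsEltQ p) v with hw
  have hwu : ∀ z : ℤ_[p], ρ (uEltQ p (((p * z : ℤ_[p])) : ℚ_[p])) w = w := by
    intro z
    have h1 : ρ (lEltQ p (-(((p * z : ℤ_[p])) : ℚ_[p]))) v = v := by
      have h2 : (-(((p * z : ℤ_[p])) : ℚ_[p])) = (((p * (-z) : ℤ_[p])) : ℚ_[p]) := by
        push_cast; ring
      rw [h2]; exact hLpZ (-z)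
    rw [hw, ← hmul, uEltQ_mul_ns, hmul, h1]
  have hwl : ∀ c : ℤ_[p], ρ (lEltQ p (c : ℚ_[p])) w = w := by
    intro c
    have h1 : ρ (uEltQ p (-(c : ℚ_[p]))) v = v := by
      have h2 : (-(c : ℚ_[p])) = (((-c : ℤ_[p])) : ℚ_[p]) := by push_cast; ring
      rw [h2]; exact hUZ (-c)
    rw [hw, ← hmul, lEltQ_mul_ns, hmul, h1]
  -- ρ (ns⁻¹) v = w
  have hwinv : ρ ((nsEltQ p)⁻¹) v = w := by
    have hmd : ρ (Matrix.GeneralLinearGroup.mkOfDetNeZero !![(-1 : ℚ_[p]), 0; 0, -1]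
        (by norm_num [Matrix.det_fin_two_of]) : GL (Fin 2) ℚ_[p]) v = v := by
      refine hIwS (mem_Iw_upper p (-1) 0 (-1) isUnit_one.neg isUnit_one.neg ?_)
      push_cast
      simp
    have h1 : (nsEltQ p)⁻¹ = nsEltQ p * Matrix.GeneralLinearGroup.mkOfDetNeZero
        !![(-1 : ℚ_[p]), 0; 0, -1] (by norm_num [Matrix.det_fin_two_of]) := by
      refine inv_eq_of_mul_eq_one_right (Units.ext (Matrix.ext fun i j => ?_))
      fin_cases i <;> fin_cases j <;>
        simp [Matrix.mul_apply, Fin.sum_univ_two, Matrix.one_fin_two]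
    rw [h1, hmul, hmd, hw]
  have hsum' : ∑ j ∈ Finset.range p, ρ (uEltQ p (j : ℚ_[p])) w = 0 := by
    simp only [hwinv] at hsum
    exact hsum
  -- the function Φ
  set Φ : ZMod p → V := fun a => ρ (lEltQ p ((a.val : ℚ_[p]))) v with hΦdef
  have hΦ0 : Φ 0 = v := by
    simp only [hΦdef, ZMod.val_zero, Nat.cast_zero, lEltQ_zero, _root_.map_one, Module.End.one_apply]
  have hcast : ∀ a : ZMod p, (((a.val : ℤ_[p])) : ℚ_[p]) = (a.val : ℚ_[p]) := by
    intro a; push_cast; rfl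
  have htoZ : ∀ a : ZMod p, PadicInt.toZMod ((a.val : ℤ_[p])) = a := by
    intro a; rw [map_natCast]; exact ZMod.natCast_rightInverse a
  have hL : ∀ c : ℤ_[p], ρ (lEltQ p (c : ℚ_[p])) v = Φ (PadicInt.toZMod c) := by
    intro c
    set a := PadicInt.toZMod c with ha
    have h1 : c - (a.val : ℤ_[p]) ∈ RingHom.ker (PadicInt.toZMod : ℤ_[p] →+* ZMod p) := by
      rw [RingHom.mem_ker, map_sub, htoZ, ha, sub_self]
    rw [PadicInt.ker_toZMod, PadicInt.maximalIdeal_eq_span_p, Ideal.mem_span_singleton] at h1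
    obtain ⟨z, hz⟩ := h1
    have h2 : c = (a.val : ℤ_[p]) + p * z := by linear_combination hz
    have h3 : lEltQ p (c : ℚ_[p])
        = lEltQ p (((a.val : ℤ_[p])) : ℚ_[p]) * lEltQ p (((p * z : ℤ_[p])) : ℚ_[p]) := by
      rw [lEltQ_mul]
      congr 1
      rw [h2]; push_cast; ring
    rw [h3, hmul, hLpZ, hcast]
  have hΦshift : ∀ (c : ℤ_[p]) (a : ZMod p),
      ρ (lEltQ p (c : ℚ_[p])) (Φ a) = Φ (PadicInt.toZMod c + a) := by
    intro c a
    have h1 : Φ a = ρ (lEltQ p (((a.val : ℤ_[p])) : ℚ_[p])) v := by rw [hcast]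
    rw [h1, ← hmul, lEltQ_mul]
    have h2 : ((c : ℚ_[p]) + ((a.val : ℤ_[p]) : ℚ_[p])) = (((c + a.val : ℤ_[p])) : ℚ_[p]) := by
      push_cast; ring
    rw [h2, hL, map_add, htoZ]
  -- ρ(u_{a.val}) w = Φ a⁻¹ for a ≠ 0
  have hG : ∀ a : ZMod p, a ≠ 0 → ρ (uEltQ p (a.val : ℚ_[p])) w = Φ a⁻¹ := by
    intro a ha
    have hcu : IsUnit ((a.val : ℤ_[p])) := by
      rw [isUnit_iff_toZMod, htoZ]; exact ha
    obtain ⟨cu, hcu'⟩ := hcu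
    set e : ℤ_[p] := ((cu⁻¹ : ℤ_[p]ˣ) : ℤ_[p]) with he
    have hce : (a.val : ℤ_[p]) * e = 1 := by rw [← hcu', he]; exact_mod_cast cu.mul_inv
    have heu : IsUnit e := (cu⁻¹ : ℤ_[p]ˣ).isUnit
    have hceQ : ((a.val : ℤ_[p]) : ℚ_[p]) * (e : ℚ_[p]) = 1 := by
      exact_mod_cast congrArg (fun t : ℤ_[p] => (t : ℚ_[p])) hce
    have hecQ : (e : ℚ_[p]) * ((a.val : ℤ_[p]) : ℚ_[p]) = 1 := by rw [mul_comm]; exact hceQ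
    have hte : PadicInt.toZMod e = a⁻¹ := by
      have h2 := congrArg PadicInt.toZMod hce
      rw [_root_.map_mul, _root_.map_one, htoZ] at h2
      exact (inv_eq_of_mul_eq_one_right h2).symm
    have hBdet : (!![((a.val : ℤ_[p]) : ℚ_[p]), -1;
        0, (e : ℚ_[p])]).det ≠ 0 := by
      rw [Matrix.det_fin_two_of, mul_zero, sub_zero, hceQ]
      norm_num
    have hBIw : ρ (Matrix.GeneralLinearGroup.mkOfDetNeZero _ hBdet) v = v := by
      refine hIwS (mem_Iw_upper p (a.val : ℤ_[p]) (-1) e ⟨cu, hcu'⟩ heu ?_)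
      push_cast
      rfl
    have hkey : uEltQ p ((a.val : ℤ_[p]) : ℚ_[p]) * nsEltQ p
        = lEltQ p (e : ℚ_[p]) * Matrix.GeneralLinearGroup.mkOfDetNeZero _ hBdet :=
      u_mul_ns_eq p _ _ hecQ hBdet
    rw [← hcast, hw, ← hmul, hkey, hmul, hBIw, hL, hte]
  -- ∑ over ZMod p
  have hsum2 : ∑ a : ZMod p, ρ (uEltQ p (a.val : ℚ_[p])) w = 0 := by
    rw [← hsum']
    refine Finset.sum_nbij' (fun (a : ZMod p) => a.val) (fun (j : ℕ) => (j : ZMod p))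
      (fun a _ => Finset.mem_range.mpr (ZMod.val_lt a)) (fun j _ => Finset.mem_univ _)
      (fun a _ => ZMod.natCast_rightInverse a)
      (fun j hj => ZMod.val_natCast_of_lt (Finset.mem_range.mp hj)) (fun a _ => rfl)
  have hSig : ∑ a : ZMod p, Φ a = v - w := by
    have hsplit : ∀ F : ZMod p → V,
        ∑ a : ZMod p, F a = F 0 + ∑ a ∈ Finset.univ.erase (0 : ZMod p), F a :=
      fun F => (Finset.add_sum_erase _ F (Finset.mem_univ 0)).symm
    have hval0 : ρ (uEltQ p (((0 : ZMod p).val : ℕ) : ℚ_[p])) w = w := by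
      simp [ZMod.val_zero]
    have herase : ∑ a ∈ Finset.univ.erase (0 : ZMod p), ρ (uEltQ p (a.val : ℚ_[p])) w
        = ∑ a ∈ Finset.univ.erase (0 : ZMod p), Φ a := by
      rw [Finset.sum_congr rfl (fun a haa => hG a (Finset.mem_erase.mp haa).1)]
      refine Finset.sum_nbij' (fun (a : ZMod p) => a⁻¹) (fun (a : ZMod p) => a⁻¹)
        ?_ ?_ ?_ ?_ (fun a _ => rfl)
      · intro a haa
        exact Finset.mem_erase.mpr ⟨inv_ne_zero (Finset.mem_erase.mp haa).1, Finset.mem_univ _⟩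
      · intro a haa
        exact Finset.mem_erase.mpr ⟨inv_ne_zero (Finset.mem_erase.mp haa).1, Finset.mem_univ _⟩
      · intro a _; exact inv_inv a
      · intro a _; exact inv_inv a
    have h5 := hsum2
    rw [hsplit (fun a => ρ (uEltQ p (a.val : ℚ_[p])) w), hval0, herase] at h5
    have h6 : ∑ a ∈ Finset.univ.erase (0 : ZMod p), Φ a = -w := eq_neg_of_add_eq_zero_right h5
    rw [hsplit Φ, hΦ0, h6, sub_eq_add_neg]
  -- all Φ values equal v
  have hΦall : ∀ b : ZMod p, Φ b = v := by
    intro b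
    by_cases hb : b = 0
    · rw [hb, hΦ0]
    · have h1 : ρ (lEltQ p ((b.val : ℤ_[p]) : ℚ_[p])) w = w := hwl _
      have h2 : ρ (lEltQ p ((b.val : ℤ_[p]) : ℚ_[p])) w = Φ b - (v - w) := by
        have hw2 : w = v - ∑ a : ZMod p, Φ a := by rw [hSig]; abel
        calc ρ (lEltQ p ((b.val : ℤ_[p]) : ℚ_[p])) w
            = ρ (lEltQ p ((b.val : ℤ_[p]) : ℚ_[p])) (v - ∑ a : ZMod p, Φ a) := by rw [← hw2]
          _ = ρ (lEltQ p ((b.val : ℤ_[p]) : ℚ_[p])) v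
              - ∑ a : ZMod p, ρ (lEltQ p ((b.val : ℤ_[p]) : ℚ_[p])) (Φ a) := by
              rw [map_sub, map_sum]
          _ = Φ b - ∑ a : ZMod p, Φ (b + a) := by
              rw [hL, htoZ]
              congr 1
              refine Finset.sum_congr rfl fun a _ => ?_
              rw [hΦshift, htoZ]
          _ = Φ b - ∑ a : ZMod p, Φ a := by
              congr 1
              have := Equiv.sum_comp (Equiv.addLeft b) Φ
              simpa using this
          _ = Φ b - (v - w) := by rw [hSig]
      have h3 : Φ b - (v - w) = w := h2 ▸ h1
      have h4 : Φ b - v = 0 := by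
        rw [show Φ b - v = (Φ b - (v - w)) - w by abel, h3, sub_self]
      exact sub_eq_zero.mp h4
  -- conclude w = v, i.e. n_s fixes v
  have hwv : w = v := by
    have h1 : ∑ a : ZMod p, Φ a = (0 : V) := by
      rw [Finset.sum_congr rfl (fun a _ => hΦall a), Finset.sum_const, Finset.card_univ,
        ZMod.card]
      have h2 : ((p : ℕ) : AlgebraicClosure (ZMod p)) = 0 :=
        CharP.cast_eq_zero (AlgebraicClosure (ZMod p)) p
      rw [← Nat.cast_smul_eq_nsmul (AlgebraicClosure (ZMod p)) p v, h2, zero_smul]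
    rw [h1] at hSig
    exact (sub_eq_zero.mp hSig.symm).symm
  have hnss : nsEltQ p ∈ S := by
    rw [mem_fixSubgroup, ← hw, hwv]
  have hPiS : PiElt p ∈ S := by
    rw [← inv_mem_iff, mem_fixSubgroup]
    exact hPi
  have hIwS' : ∀ {g : GL (Fin 2) ℚ_[p]}, g ∈ Iw p → g ∈ S := fun hg => hIwS hg
  -- diagonal elements
  have hEdet : (!![(1:ℚ_[p]), 0; 0, (p : ℚ_[p])]).det ≠ 0 := by
    simp [Matrix.det_fin_two_of, hpQ]
  have hDdet : (!![(p : ℚ_[p]), 0; 0, (1:ℚ_[p])]).det ≠ 0 := by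
    simp [Matrix.det_fin_two_of, hpQ]
  set E : GL (Fin 2) ℚ_[p] := Matrix.GeneralLinearGroup.mkOfDetNeZero _ hEdet with hEdef
  set DD : GL (Fin 2) ℚ_[p] := Matrix.GeneralLinearGroup.mkOfDetNeZero _ hDdet with hDdef
  have hEval : (E : Matrix (Fin 2) (Fin 2) ℚ_[p]) = !![1, 0; 0, (p : ℚ_[p])] := rfl
  have hDval : (DD : Matrix (Fin 2) (Fin 2) ℚ_[p]) = !![(p : ℚ_[p]), 0; 0, 1] := rfl
  have hES : E ∈ S := by
    have hmddet : (!![(1:ℚ_[p]), 0; 0, -1]).det ≠ 0 := by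
      norm_num [Matrix.det_fin_two_of]
    have hmd : Matrix.GeneralLinearGroup.mkOfDetNeZero _ hmddet ∈ S := by
      refine hIwS' (mem_Iw_upper p 1 0 (-1) isUnit_one isUnit_one.neg ?_)
      push_cast
      simp
    have h1 : E = Matrix.GeneralLinearGroup.mkOfDetNeZero _ hmddet
        * (PiElt p * nsEltQ p) := by
      refine Units.ext (Matrix.ext fun i j => ?_)
      rw [Units.val_mul, Units.val_mul, hEval]
      fin_cases i <;> fin_cases j <;> simp [Matrix.mul_apply, Fin.sum_univ_two]
    rw [h1]
    exact mul_mem hmd (mul_mem hPiS hnss)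
  have hDS : DD ∈ S := by
    have h1 : DD * E = (PiElt p) ^ 2 := by
      refine Units.ext (Matrix.ext fun i j => ?_)
      rw [Units.val_mul, Units.val_pow_eq_pow_val, sq, hEval, hDval]
      fin_cases i <;> fin_cases j <;> simp [Matrix.mul_apply, Fin.sum_univ_two]
    have h2 : DD = (PiElt p) ^ 2 * E⁻¹ := eq_mul_inv_of_mul_eq h1
    rw [h2]
    exact mul_mem (pow_mem hPiS 2) (inv_mem hES)
  have hDpow : ∀ m : ℕ, ((DD ^ m : GL (Fin 2) ℚ_[p]) : Matrix (Fin 2) (Fin 2) ℚ_[p])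
      = !![(p : ℚ_[p]) ^ m, 0; 0, 1] := by
    intro m
    rw [Units.val_pow_eq_pow_val, hDval]
    induction m with
    | zero => simp [Matrix.one_fin_two]
    | succ n ih =>
      rw [pow_succ, ih, pow_succ]
      refine Matrix.ext fun i j => ?_
      fin_cases i <;> fin_cases j <;> simp [Matrix.mul_apply, Fin.sum_univ_two]
  -- all unipotent elements fix v
  have hUS : ∀ x : ℚ_[p], uEltQ p x ∈ S := by
    intro x
    obtain ⟨m, hm⟩ : ∃ m : ℕ, ‖x‖ ≤ (p : ℝ) ^ m := by
      obtain ⟨m, hm⟩ := pow_unbounded_of_one_lt ‖x‖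
        (show (1 : ℝ) < p from by exact_mod_cast hp.one_lt)
      exact ⟨m, le_of_lt hm⟩
    have hppos : (0 : ℝ) < (p : ℝ) ^ m := by
      have h0 : (0 : ℝ) < (p : ℝ) := by exact_mod_cast hp.pos
      positivity
    have hz1 : ‖(p : ℚ_[p]) ^ m * x‖ ≤ 1 := by
      rw [norm_mul, norm_pow, Padic.norm_p, inv_pow]
      calc ((p : ℝ) ^ m)⁻¹ * ‖x‖ ≤ ((p : ℝ) ^ m)⁻¹ * (p : ℝ) ^ m := by gcongr
        _ = 1 := inv_mul_cancel₀ hppos.ne'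
    obtain ⟨z, hz⟩ : ∃ z : ℤ_[p], (z : ℚ_[p]) = (p : ℚ_[p]) ^ m * x := ⟨⟨_, hz1⟩, rfl⟩
    have hid : DD ^ m * uEltQ p x = uEltQ p (z : ℚ_[p]) * DD ^ m := by
      refine Units.ext (Matrix.ext fun i j => ?_)
      rw [Units.val_mul, Units.val_mul, hDpow m]
      fin_cases i <;> fin_cases j <;>
        simp [Matrix.mul_apply, Fin.sum_univ_two, hz]
    have h2 : uEltQ p x = (DD ^ m)⁻¹ * (uEltQ p (z : ℚ_[p]) * DD ^ m) := by
      rw [← hid, inv_mul_cancel_left]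
    rw [h2]
    exact mul_mem (inv_mem (pow_mem hDS m))
      (mul_mem ((mem_fixSubgroup ρ v _).mpr (hUZ _)) (pow_mem hDS m))
  have hnssI : (nsEltQ p)⁻¹ ∈ S := inv_mem hnss
  have hLS : ∀ x : ℚ_[p], lEltQ p x ∈ S := by
    intro x
    have h1 : lEltQ p x = (nsEltQ p)⁻¹ * (uEltQ p (-x) * nsEltQ p) := by
      rw [uEltQ_mul_ns, neg_neg, inv_mul_cancel_left]
    rw [h1]
    exact mul_mem hnssI (mul_mem (hUS _) hnss)
  -- diagonal matrices diag(x,1)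
  have hDL : ∀ x : ℚ_[p], x ≠ 0 → ∀ g : GL (Fin 2) ℚ_[p],
      (g : Matrix (Fin 2) (Fin 2) ℚ_[p]) = !![x, 0; 0, 1] → g ∈ S := by
    intro x hx g hg
    have hnorm : ‖x‖ = (p : ℝ) ^ (-x.valuation) := Padic.norm_eq_zpow_neg_valuation hx
    have hdiagmem : ∀ (ε : ℚ_[p]) (hε : ‖ε‖ = 1) (g' : GL (Fin 2) ℚ_[p]),
        (g' : Matrix (Fin 2) (Fin 2) ℚ_[p]) = !![ε, 0; 0, 1] → g' ∈ S := by
      intro ε hε g' hg'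
      obtain ⟨z, hz⟩ : ∃ z : ℤ_[p], (z : ℚ_[p]) = ε := ⟨⟨ε, le_of_eq hε⟩, rfl⟩
      have hzu : IsUnit z := PadicInt.isUnit_iff.mpr (by rw [PadicInt.norm_def, hz, hε])
      refine hIwS' (mem_Iw_upper p z 0 1 hzu isUnit_one ?_)
      rw [hg', hz]
      push_cast
      rfl
    rcases le_or_gt 0 x.valuation with hn0 | hn0
    · set m := x.valuation.toNat with hm
      have hmn : (m : ℤ) = x.valuation := Int.toNat_of_nonneg hn0
      have hεx : (x / (p : ℚ_[p]) ^ m) * (p : ℚ_[p]) ^ m = x :=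
        div_mul_cancel₀ x (pow_ne_zero m hpQ)
      have hεnorm : ‖x / (p : ℚ_[p]) ^ m‖ = 1 := by
        have h2 : ‖x / (p : ℚ_[p]) ^ m‖ * ‖(p : ℚ_[p]) ^ m‖ = ‖x‖ := by
          rw [← norm_mul, hεx]
        rw [Padic.norm_p_pow, hnorm, ← hmn] at h2
        have h3 : ((p : ℝ)) ^ (-(m : ℤ)) ≠ 0 := by
          apply zpow_ne_zero
          exact_mod_cast hp.ne_zero
        exact mul_right_cancel₀ h3 (by rw [h2, one_mul])
      have hdet2 : (!![x / (p : ℚ_[p]) ^ m, 0; 0, (1 : ℚ_[p])]).det ≠ 0 := by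
        simp only [Matrix.det_fin_two_of, mul_one, mul_zero, sub_zero]
        intro h
        rw [h, norm_zero] at hεnorm
        norm_num at hεnorm
      have hgl : g = Matrix.GeneralLinearGroup.mkOfDetNeZero _ hdet2 * DD ^ m := by
        refine Units.ext (Matrix.ext fun i j => ?_)
        rw [Units.val_mul, hDpow m, hg]
        fin_cases i <;> fin_cases j <;>
          simp [Matrix.mul_apply, Fin.sum_univ_two, hεx]
      rw [hgl]
      exact mul_mem (hdiagmem _ hεnorm _ rfl) (pow_mem hDS m)
    · set m := (-x.valuation).toNat with hm
      have hmn : (m : ℤ) = -x.valuation := Int.toNat_of_nonneg (by omega)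
      have hεnorm : ‖x * (p : ℚ_[p]) ^ m‖ = 1 := by
        rw [norm_mul, Padic.norm_p_pow, hnorm, hmn]
        rw [← zpow_add₀ (show ((p:ℝ)) ≠ 0 from by exact_mod_cast hp.ne_zero)]
        norm_num
      have hdet2 : (!![x * (p : ℚ_[p]) ^ m, 0; 0, (1 : ℚ_[p])]).det ≠ 0 := by
        simp only [Matrix.det_fin_two_of, mul_one, mul_zero, sub_zero]
        intro h
        rw [h, norm_zero] at hεnorm
        norm_num at hεnorm
      have hgl : g * DD ^ m = Matrix.GeneralLinearGroup.mkOfDetNeZero _ hdet2 := by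
        refine Units.ext (Matrix.ext fun i j => ?_)
        rw [Units.val_mul, hDpow m, hg]
        fin_cases i <;> fin_cases j <;>
          simp [Matrix.mul_apply, Fin.sum_univ_two]
      have hgl2 : g = Matrix.GeneralLinearGroup.mkOfDetNeZero _ hdet2 * (DD ^ m)⁻¹ :=
        eq_mul_inv_of_mul_eq hgl
      rw [hgl2]
      exact mul_mem (hdiagmem _ hεnorm _ rfl) (inv_mem (pow_mem hDS m))
  -- diagonal matrices diag(1,δ)
  have hDR : ∀ δ : ℚ_[p], δ ≠ 0 → ∀ g : GL (Fin 2) ℚ_[p],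
      (g : Matrix (Fin 2) (Fin 2) ℚ_[p]) = !![1, 0; 0, δ] → g ∈ S := by
    intro δ hδ g hg
    have hdet2 : (!![δ, 0; 0, (1:ℚ_[p])]).det ≠ 0 := by
      simp [Matrix.det_fin_two_of, hδ]
    have h1 : g * nsEltQ p = nsEltQ p * Matrix.GeneralLinearGroup.mkOfDetNeZero _ hdet2 := by
      refine Units.ext (Matrix.ext fun i j => ?_)
      rw [Units.val_mul, Units.val_mul, hg]
      fin_cases i <;> fin_cases j <;>
        simp [Matrix.mul_apply, Fin.sum_univ_two]
    have h2 : g = nsEltQ p * Matrix.GeneralLinearGroup.mkOfDetNeZero _ hdet2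
        * (nsEltQ p)⁻¹ := eq_mul_inv_of_mul_eq h1
    rw [h2]
    exact mul_mem (mul_mem hnss (hDL δ hδ _ rfl)) hnssI
  -- final decomposition
  intro g
  have hdet : ((g : Matrix (Fin 2) (Fin 2) ℚ_[p])).det ≠ 0 := by
    have h1 : IsUnit ((g : Matrix (Fin 2) (Fin 2) ℚ_[p])).det :=
      (Matrix.isUnit_iff_isUnit_det _).mp g.isUnit
    exact h1.ne_zero
  rw [Matrix.det_fin_two] at hdet
  suffices hgS : g ∈ S by exact (mem_fixSubgroup ρ v g).mp hgS
  by_cases hc : (g : Matrix (Fin 2) (Fin 2) ℚ_[p]) 1 0 = 0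
  · -- upper triangular case
    have ha : (g : Matrix (Fin 2) (Fin 2) ℚ_[p]) 0 0 ≠ 0 := by
      intro h; apply hdet; rw [h, hc]; ring
    have hd : (g : Matrix (Fin 2) (Fin 2) ℚ_[p]) 1 1 ≠ 0 := by
      intro h; apply hdet; rw [h, hc]; ring
    have hdetA : (!![(g : Matrix (Fin 2) (Fin 2) ℚ_[p]) 0 0, 0; 0, (1:ℚ_[p])]).det ≠ 0 := by
      simp [Matrix.det_fin_two_of, ha]
    have hdetD : (!![(1:ℚ_[p]), 0; 0, (g : Matrix (Fin 2) (Fin 2) ℚ_[p]) 1 1]).det ≠ 0 := by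
      simp [Matrix.det_fin_two_of, hd]
    have hdecomp : g = Matrix.GeneralLinearGroup.mkOfDetNeZero _ hdetA
        * Matrix.GeneralLinearGroup.mkOfDetNeZero _ hdetD
        * uEltQ p ((g : Matrix (Fin 2) (Fin 2) ℚ_[p]) 0 1
            / (g : Matrix (Fin 2) (Fin 2) ℚ_[p]) 0 0) := by
      refine Units.ext (Matrix.ext fun i j => ?_)
      rw [Units.val_mul, Units.val_mul]
      fin_cases i <;> fin_cases j <;>
        simp [Matrix.mul_apply, Fin.sum_univ_two, hc]
      field_simp
    rw [hdecomp]
    exact mul_mem (mul_mem (hDL _ ha _ rfl) (hDR _ hd _ rfl)) (hUS _)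
  · -- Bruhat cell case
    set a := (g : Matrix (Fin 2) (Fin 2) ℚ_[p]) 0 0 with hA
    set b := (g : Matrix (Fin 2) (Fin 2) ℚ_[p]) 0 1 with hB
    set c := (g : Matrix (Fin 2) (Fin 2) ℚ_[p]) 1 0 with hC
    set d := (g : Matrix (Fin 2) (Fin 2) ℚ_[p]) 1 1 with hD
    have hδ : a * d - b * c ≠ 0 := hdet
    have hdet2 : (!![(1:ℚ_[p]), 0; 0, a * d - b * c]).det ≠ 0 := by
      simp [Matrix.det_fin_two_of, hδ]
    have hδ' : d * a - c * b ≠ 0 := by rw [mul_comm d a, mul_comm c b]; exact hδ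
    have hdecomp : g = uEltQ p ((a - 1) / c) * lEltQ p c
        * uEltQ p ((d / (a * d - b * c) - 1) / c)
        * Matrix.GeneralLinearGroup.mkOfDetNeZero _ hdet2 := by
      refine Units.ext (Matrix.ext fun i j => ?_)
      rw [Units.val_mul, Units.val_mul, Units.val_mul]
      fin_cases i <;> fin_cases j <;>
        simp [Matrix.mul_apply, Fin.sum_univ_two, ← hA, ← hB, ← hC, ← hD] <;>
        field_simp <;> ring
    rw [hdecomp]
    exact mul_mem (mul_mem (mul_mem (hUS _) (hLS _)) (hUS _)) (hDR _ hδ _ rfl)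

end
end
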